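/- arXiv:2503.07422 — 5 statements merged into one kernel-verified Lean document; each statement's English description precedes it below -/
import Mathlib

section
/- Let $F$ be a non-archimedean local field, $V$ an $r$-dimensional $F$-vector space, $\nu$ a non-archimedean norm on $V$, and $L$ an $O_F$-lattice in $V$. Then there exists an $O_F$-basis $\{u_1,\dots,u_r\}$ of $L$ that is orthogonal with respect to $\nu$, i.e., $\nu(a_1u_1+\cdots+a_ru_r) = \max_i \nu(a_iu_i)$ for all $a_1,\dots,a_r \in F$. -/
/-- An abstract (non-archimedean, multiplicative) absolute value on a field `F`. -/
structure NAAbs (F : Type*) [Field F] where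
  abs : F → ℝ
  nonneg : ∀ a, 0 ≤ abs a
  eq_zero : ∀ a, abs a = 0 ↔ a = 0
  map_mul : ∀ a b, abs (a * b) = abs a * abs b
  ultra : ∀ a b, abs (a + b) ≤ max (abs a) (abs b)

/-- `F` together with `A` is a non-archimedean *local* field with uniformizer `π`:
the value group is discrete with generator `|π| < 1`, the residue field is finite,
and `F` is complete. -/
def NAAbs.IsLocal {F : Type*} [Field F] (A : NAAbs F) (π : F) : Prop :=
  π ≠ 0 ∧ A.abs π < 1 ∧ (∀ a : F, A.abs a < 1 → A.abs a ≤ A.abs π) ∧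
  (∃ S : Finset F, ∀ a : F, A.abs a ≤ 1 → ∃ s ∈ S, A.abs (a - s) < 1) ∧
  (∀ f : ℕ → F, (∀ ε : ℝ, 0 < ε → ∃ N, ∀ m ≥ N, ∀ n ≥ N, A.abs (f m - f n) < ε) →
    ∃ x : F, ∀ ε : ℝ, 0 < ε → ∃ N, ∀ n ≥ N, A.abs (f n - x) < ε)

/-- A non-archimedean norm on an `F`-vector space `V`, relative to the absolute value `A`. -/
structure NANorm {F : Type*} [Field F] (A : NAAbs F)
    (V : Type*) [AddCommGroup V] [Module F V] where
  nu : V → ℝ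
  nonneg : ∀ v, 0 ≤ nu v
  eq_zero : ∀ v, nu v = 0 ↔ v = 0
  smul_eq : ∀ (a : F) (v : V), nu (a • v) = A.abs a * nu v
  ultra : ∀ u v, nu (u + v) ≤ max (nu u) (nu v)

/-- `b` is an `O_F`-basis of the `O_F`-lattice `L ⊆ V`. -/
def IsLatticeBasis {F : Type*} [Field F] (A : NAAbs F)
    {V : Type*} [AddCommGroup V] [Module F V]
    {ι : Type*} [Fintype ι] (b : ι → V) (L : Set V) : Prop :=
  LinearIndependent F b ∧
  ∀ v : V, v ∈ L ↔ ∃ c : ι → F, (∀ i, A.abs (c i) ≤ 1) ∧ v = ∑ i, c i • b i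

/-- `b` is orthogonal with respect to the norm(-like function) `νn`. -/
def IsOrthogonalFor {F : Type*} [Field F] (A : NAAbs F)
    {V : Type*} [AddCommGroup V] [Module F V]
    {ι : Type*} [Fintype ι] (νn : V → ℝ) (b : ι → V) : Prop :=
  ∀ c : ι → F, νn (∑ i, c i • b i) = ⨆ i, νn (c i • b i)
namespace Stmt1Aux

open Finset Set Submodule

variable {F : Type*} [Field F] {V : Type*} [AddCommGroup V] [Module F V]

theorem abs_zero (A : NAAbs F) : A.abs 0 = 0 := (A.eq_zero 0).2 rfl

theorem abs_one (A : NAAbs F) : A.abs 1 = 1 := by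
  have h := A.map_mul 1 1
  rw [one_mul] at h
  have h0 : A.abs 1 ≠ 0 := fun h' => one_ne_zero ((A.eq_zero 1).1 h')
  have h2 : A.abs 1 * (A.abs 1 - 1) = 0 := by nlinarith [h]
  rcases mul_eq_zero.1 h2 with h3 | h3
  · exact absurd h3 h0
  · linarith

theorem abs_pos (A : NAAbs F) {a : F} (ha : a ≠ 0) : 0 < A.abs a :=
  lt_of_le_of_ne (A.nonneg a) (fun h => ha ((A.eq_zero a).1 h.symm))

theorem abs_neg_one (A : NAAbs F) : A.abs (-1) = 1 := by
  have h := A.map_mul (-1) (-1)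
  rw [neg_mul_neg, one_mul, abs_one] at h
  have h2 : (A.abs (-1) - 1) * (A.abs (-1) + 1) = 0 := by nlinarith [h]
  rcases mul_eq_zero.1 h2 with h3 | h3
  · linarith
  · nlinarith [A.nonneg (-1)]

theorem abs_neg (A : NAAbs F) (a : F) : A.abs (-a) = A.abs a := by
  have : (-a : F) = (-1) * a := by ring
  rw [this, A.map_mul, abs_neg_one, one_mul]

theorem abs_inv (A : NAAbs F) {a : F} (ha : a ≠ 0) : A.abs a⁻¹ = (A.abs a)⁻¹ := by
  have h := A.map_mul a a⁻¹
  rw [mul_inv_cancel₀ ha, abs_one] at h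
  exact eq_inv_of_mul_eq_one_right h.symm

theorem abs_pow (A : NAAbs F) (a : F) (k : ℕ) : A.abs (a ^ k) = A.abs a ^ k := by
  induction k with
  | zero => simpa using abs_one A
  | succ k ih => rw [pow_succ, pow_succ, A.map_mul, ih]

/-- ultrametric bound for finite sums, for any ultrametric "norm-like" function. -/
theorem ultra_sum_le {M ι : Type*} [AddCommMonoid M] (μ : M → ℝ)
    (hu : ∀ x y, μ (x + y) ≤ max (μ x) (μ y)) {B : ℝ} (h0 : μ 0 ≤ B)
    (s : Finset ι) (f : ι → M) (h : ∀ i ∈ s, μ (f i) ≤ B) :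
    μ (∑ i ∈ s, f i) ≤ B := by
  induction s using Finset.cons_induction with
  | empty => simpa using h0
  | cons a s ha ih =>
    rw [Finset.sum_cons]
    exact le_trans (hu _ _) (max_le (h a (Finset.mem_cons_self _ _))
      (ih fun i hi => h i (Finset.mem_cons.2 (Or.inr hi))))

theorem nu_zero {A : NAAbs F} (ν : NANorm A V) : ν.nu 0 = 0 := (ν.eq_zero 0).2 rfl

theorem nu_neg {A : NAAbs F} (ν : NANorm A V) (x : V) : ν.nu (-x) = ν.nu x := by
  have : (-x : V) = (-1 : F) • x := by simp
  rw [this, ν.smul_eq, abs_neg_one, one_mul]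

theorem nu_add_le {A : NAAbs F} (ν : NANorm A V) (x y : V) :
    ν.nu (x + y) ≤ ν.nu x + ν.nu y :=
  le_trans (ν.ultra x y) (max_le (le_add_of_nonneg_right (ν.nonneg _))
    (le_add_of_nonneg_left (ν.nonneg _)))

/-- The `O_F`-span of a finite family. -/
def latt (A : NAAbs F) {n : ℕ} (b : Fin n → V) : Set V :=
  {v | ∃ c : Fin n → F, (∀ i, A.abs (c i) ≤ 1) ∧ v = ∑ i, c i • b i}

theorem mem_latt (A : NAAbs F) {n : ℕ} (b : Fin n → V) (c : Fin n → F)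
    (hc : ∀ i, A.abs (c i) ≤ 1) : (∑ i, c i • b i) ∈ latt A b := ⟨c, hc, rfl⟩

theorem self_mem_latt (A : NAAbs F) {n : ℕ} (b : Fin n → V) (i : Fin n) :
    b i ∈ latt A b := by
  classical
  refine ⟨fun j => if j = i then 1 else 0, fun j => ?_, ?_⟩
  · by_cases h : j = i <;> simp [h, abs_one A, abs_zero A, zero_le_one]
  · simp [ite_smul]

theorem latt_subset (A : NAAbs F) {n m : ℕ} {g : Fin m → V} {b : Fin n → V}
    (h : ∀ k, g k ∈ latt A b) : latt A g ⊆ latt A b := by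
  rintro v ⟨c, hc, rfl⟩
  choose d hd hg using h
  refine ⟨fun i => ∑ k, c k * d k i, fun i => ?_, ?_⟩
  · refine ultra_sum_le A.abs A.ultra (by rw [abs_zero A]; exact zero_le_one) _ _
      (fun k _ => ?_)
    rw [A.map_mul]
    exact mul_le_one₀ (hc k) (A.nonneg _) (hd k i)
  · calc ∑ k, c k • g k = ∑ k, ∑ i, (c k * d k i) • b i := by
          refine Finset.sum_congr rfl fun k _ => ?_
          rw [hg k, Finset.smul_sum]
          exact Finset.sum_congr rfl fun i _ => smul_smul _ _ _
      _ = ∑ i, ∑ k, (c k * d k i) • b i := Finset.sum_comm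
      _ = ∑ i, (∑ k, c k * d k i) • b i := by
          refine Finset.sum_congr rfl fun i _ => ?_
          rw [Finset.sum_smul]

theorem latt_subset_span (A : NAAbs F) {n : ℕ} (b : Fin n → V) :
    latt A b ⊆ (span F (Set.range b) : Submodule F V) := by
  rintro v ⟨c, hc, rfl⟩
  exact Submodule.sum_mem _ fun i _ => Submodule.smul_mem _ _ (subset_span ⟨i, rfl⟩)

theorem span_eq_of_latt_eq (A : NAAbs F) {n m : ℕ} {g : Fin m → V} {b : Fin n → V}
    (h : latt A g = latt A b) :
    span F (Set.range g) = span F (Set.range b) := by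
  apply le_antisymm
  · rw [span_le]
    rintro x ⟨k, rfl⟩
    exact latt_subset_span A b (h ▸ self_mem_latt A g k)
  · rw [span_le]
    rintro x ⟨i, rfl⟩
    exact latt_subset_span A g (h ▸ self_mem_latt A b i)

theorem linindep_of_latt_eq (A : NAAbs F) {n : ℕ} {g b : Fin n → V}
    (hb : LinearIndependent F b) (h : latt A g = latt A b) :
    LinearIndependent F g := by
  rw [linearIndependent_iff_card_eq_finrank_span] at hb ⊢
  rw [hb]
  unfold Set.finrank
  rw [span_eq_of_latt_eq A h]

theorem coeff_unique (A : NAAbs F) {n : ℕ} {g : Fin n → V}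
    (hg : LinearIndependent F g) {c d : Fin n → F}
    (h : ∑ i, c i • g i = ∑ i, d i • g i) : c = d := by
  funext i
  have h2 : ∑ i, (c i - d i) • g i = 0 := by
    simp only [sub_smul, Finset.sum_sub_distrib, h, sub_self]
  have := Fintype.linearIndependent_iff.1 hg _ h2 i
  exact sub_eq_zero.1 this

/-- coefficient-primitive combinations. -/
def primSet (A : NAAbs F) {n : ℕ} (b : Fin n → V) : Set V :=
  {v | ∃ c : Fin n → F, (∀ i, A.abs (c i) ≤ 1) ∧ (∃ i, A.abs (c i) = 1) ∧ v = ∑ i, c i • b i}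

theorem primSet_eq_diff (A : NAAbs F) {π : F} (hπ0 : π ≠ 0) (hπ1 : A.abs π < 1)
    (hsm : ∀ a : F, A.abs a < 1 → A.abs a ≤ A.abs π) {n : ℕ} {g : Fin n → V}
    (hg : LinearIndependent F g) :
    primSet A g = latt A g \ ((π • ·) '' latt A g) := by
  have hπpos : 0 < A.abs π := abs_pos A hπ0
  ext x
  constructor
  · rintro ⟨c, hc1, ⟨i₀, hi₀⟩, rfl⟩
    refine ⟨⟨c, hc1, rfl⟩, ?_⟩
    rintro ⟨w, ⟨d, hd, rfl⟩, hw⟩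
    have hw2 : ∑ i, (π * d i) • g i = ∑ i, c i • g i := by
      dsimp at hw
      rw [← hw, Finset.smul_sum]
      exact Finset.sum_congr rfl fun i _ => (smul_smul _ _ _).symm
    have hcd := coeff_unique A hg hw2
    have : A.abs (c i₀) ≤ A.abs π := by
      rw [← congrFun hcd i₀, A.map_mul]
      calc A.abs π * A.abs (d i₀) ≤ A.abs π * 1 :=
            mul_le_mul_of_nonneg_left (hd i₀) (le_of_lt hπpos)
        _ = A.abs π := mul_one _
    rw [hi₀] at this
    linarith
  · rintro ⟨⟨c, hc1, rfl⟩, hnot⟩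
    refine ⟨c, hc1, ?_, rfl⟩
    by_contra hno
    push_neg at hno
    apply hnot
    have hlt : ∀ i, A.abs (c i) ≤ A.abs π := fun i =>
      hsm _ (lt_of_le_of_ne (hc1 i) (hno i))
    refine ⟨∑ i, (c i / π) • g i, ⟨fun i => c i / π, fun i => ?_, rfl⟩, ?_⟩
    · show A.abs (c i / π) ≤ 1
      rw [div_eq_mul_inv, A.map_mul, abs_inv A hπ0]
      calc A.abs (c i) * (A.abs π)⁻¹ ≤ A.abs π * (A.abs π)⁻¹ :=
            mul_le_mul_of_nonneg_right (hlt i) (by positivity)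
        _ = 1 := mul_inv_cancel₀ (ne_of_gt hπpos)
    · dsimp
      rw [Finset.smul_sum]
      refine Finset.sum_congr rfl fun i _ => ?_
      rw [smul_smul, mul_div_cancel₀ _ hπ0]

theorem primSet_eq (A : NAAbs F) {π : F} (hπ0 : π ≠ 0) (hπ1 : A.abs π < 1)
    (hsm : ∀ a : F, A.abs a < 1 → A.abs a ≤ A.abs π) {n : ℕ} {g b : Fin n → V}
    (hg : LinearIndependent F g) (hb : LinearIndependent F b)
    (h : latt A g = latt A b) : primSet A g = primSet A b := by
  rw [primSet_eq_diff A hπ0 hπ1 hsm hg, primSet_eq_diff A hπ0 hπ1 hsm hb, h]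

theorem abs_eq_pow (A : NAAbs F) {π : F} (hπ0 : π ≠ 0) (hπ1 : A.abs π < 1)
    (hsm : ∀ a : F, A.abs a < 1 → A.abs a ≤ A.abs π) :
    ∀ a : F, a ≠ 0 → A.abs a ≤ 1 → ∃ k : ℕ, A.abs a = A.abs π ^ k := by
  have hπpos : 0 < A.abs π := abs_pos A hπ0
  suffices aux : ∀ N : ℕ, ∀ a : F, a ≠ 0 → A.abs a ≤ 1 → A.abs π ^ N < A.abs a →
      ∃ k : ℕ, A.abs a = A.abs π ^ k by
    intro a ha h1
    obtain ⟨N, hN⟩ := exists_pow_lt_of_lt_one (abs_pos A ha) hπ1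
    exact aux N a ha h1 hN
  intro N
  induction N with
  | zero => intro a ha h1 hlt; simp at hlt; linarith
  | succ N ih =>
    intro a ha h1 hlt
    rcases eq_or_lt_of_le h1 with he | hl
    · exact ⟨0, by simpa using he⟩
    · have h2 : A.abs a ≤ A.abs π := hsm a hl
      have ha' : a * π⁻¹ ≠ 0 := mul_ne_zero ha (inv_ne_zero hπ0)
      have habs' : A.abs (a * π⁻¹) = A.abs a / A.abs π := by
        rw [A.map_mul, abs_inv A hπ0, div_eq_mul_inv]
      obtain ⟨k, hk⟩ := ih (a * π⁻¹) ha'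
        (by rw [habs']; exact div_le_one_of_le₀ h2 (le_of_lt hπpos))
        (by rw [habs', lt_div_iff₀ hπpos, ← pow_succ]; exact hlt)
      refine ⟨k + 1, ?_⟩
      have : A.abs a = A.abs (a * π⁻¹) * A.abs π := by
        rw [habs', div_mul_cancel₀ _ (ne_of_gt hπpos)]
      rw [this, hk, pow_succ]

theorem exists_unit_scale (A : NAAbs F) {π : F} (hπ0 : π ≠ 0) (hπ1 : A.abs π < 1)
    (hsm : ∀ a : F, A.abs a < 1 → A.abs a ≤ A.abs π) {a : F} (ha : 1 < A.abs a) :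
    ∃ q : F, 0 < A.abs q ∧ A.abs q ≤ 1 ∧ A.abs q * A.abs a = 1 := by
  have ha0 : a ≠ 0 := by
    intro h; rw [h, abs_zero A] at ha; linarith
  have hinv : A.abs a⁻¹ = (A.abs a)⁻¹ := abs_inv A ha0
  obtain ⟨k, hk⟩ := abs_eq_pow A hπ0 hπ1 hsm a⁻¹ (inv_ne_zero ha0)
    (by rw [hinv]; exact le_of_lt (inv_lt_one_of_one_lt₀ ha))
  refine ⟨π ^ k, ?_, ?_, ?_⟩
  · rw [abs_pow]; exact pow_pos (abs_pos A hπ0) k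
  · rw [abs_pow]; exact pow_le_one₀ (A.nonneg π) (le_of_lt hπ1)
  · rw [abs_pow, ← hk, hinv]
    exact inv_mul_cancel₀ (by positivity)

theorem exists_min_prim (A : NAAbs F) (π : F) (hloc : A.IsLocal π) (ν : NANorm A V)
    {n : ℕ} (b : Fin (n + 1) → V) :
    ∃ c : Fin (n + 1) → F, (∀ i, A.abs (c i) ≤ 1) ∧ (∃ i, A.abs (c i) = 1) ∧
      ∀ d : Fin (n + 1) → F, (∀ i, A.abs (d i) ≤ 1) → (∃ i, A.abs (d i) = 1) →
        ν.nu (∑ i, c i • b i) ≤ ν.nu (∑ i, d i • b i) := by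
  classical
  obtain ⟨hπ0, hπ1, hπsm, ⟨S, hS⟩, hcomp⟩ := hloc
  have hπpos : 0 < A.abs π := abs_pos A hπ0
  letI : MetricSpace F :=
    { dist := fun a b => A.abs (a - b)
      dist_self := fun a => by simp [abs_zero A]
      dist_comm := fun a b => by
        have : (a - b : F) = -(b - a) := by ring
        simp only [this, abs_neg A]
      dist_triangle := fun a b c => by
        have h1 : (a - c : F) = (a - b) + (b - c) := by ring
        calc A.abs (a - c) ≤ max (A.abs (a - b)) (A.abs (b - c)) := by
              rw [h1]; exact A.ultra _ _
          _ ≤ A.abs (a - b) + A.abs (b - c) :=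
              max_le (le_add_of_nonneg_right (A.nonneg _))
                (le_add_of_nonneg_left (A.nonneg _))
      eq_of_dist_eq_zero := fun h => sub_eq_zero.1 ((A.eq_zero _).1 h) }
  have hdist : ∀ a b : F, dist a b = A.abs (a - b) := fun _ _ => rfl
  haveI : CompleteSpace F := by
    apply Metric.complete_of_cauchySeq_tendsto
    intro u hu
    obtain ⟨x, hx⟩ := hcomp u (fun ε hε => by
      obtain ⟨N, hN⟩ := Metric.cauchySeq_iff.1 hu ε hε
      exact ⟨N, fun m hm k hk => hN m hm k hk⟩)
    refine ⟨x, Metric.tendsto_atTop.2 fun ε hε => ?_⟩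
    obtain ⟨N, hN⟩ := hx ε hε
    exact ⟨N, fun k hk => hN k hk⟩
  -- covering of the unit ball at all scales
  have cover : ∀ m : ℕ, ∃ T : Finset F, ∀ x : F, A.abs x ≤ 1 →
      ∃ t ∈ T, A.abs (x - t) ≤ A.abs π ^ m := by
    intro m
    induction m with
    | zero => exact ⟨{0}, fun x hx => ⟨0, Finset.mem_singleton_self 0, by simpa using hx⟩⟩
    | succ m ih =>
      obtain ⟨T, hT⟩ := ih
      refine ⟨(T ×ˢ S).image (fun p => p.1 + p.2 * π ^ m), fun x hx => ?_⟩
      obtain ⟨t, ht, hxt⟩ := hT x hx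
      have hy : A.abs ((x - t) / π ^ m) ≤ 1 := by
        rw [div_eq_mul_inv, A.map_mul, abs_inv A (pow_ne_zero m hπ0), abs_pow]
        rw [← div_eq_mul_inv]
        exact div_le_one_of_le₀ hxt (by positivity)
      obtain ⟨s, hs, hys⟩ := hS _ hy
      refine ⟨t + s * π ^ m, Finset.mem_image.2 ⟨(t, s),
        Finset.mem_product.2 ⟨ht, hs⟩, rfl⟩, ?_⟩
      have hx2 : x - (t + s * π ^ m) = ((x - t) / π ^ m - s) * π ^ m := by
        rw [sub_mul, div_mul_cancel₀ _ (pow_ne_zero m hπ0)]; ring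
      rw [hx2, A.map_mul, abs_pow]
      calc A.abs ((x - t) / π ^ m - s) * A.abs π ^ m
          ≤ A.abs π * A.abs π ^ m :=
            mul_le_mul_of_nonneg_right (hπsm _ hys) (by positivity)
        _ = A.abs π ^ (m + 1) := by ring
  have hball : IsCompact (Metric.closedBall (0 : F) 1) := by
    apply TotallyBounded.isCompact_of_isClosed _ Metric.isClosed_closedBall
    rw [Metric.totallyBounded_iff]
    intro ε hε
    obtain ⟨m, hm⟩ := exists_pow_lt_of_lt_one hε hπ1
    obtain ⟨T, hT⟩ := cover m
    refine ⟨(T : Set F), T.finite_toSet, fun x hx => ?_⟩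
    have hx1 : A.abs x ≤ 1 := by
      have := Metric.mem_closedBall.1 hx
      rwa [hdist, sub_zero] at this
    obtain ⟨t, ht, h⟩ := hT x hx1
    refine Set.mem_iUnion₂.2 ⟨t, ht, ?_⟩
    rw [Metric.mem_ball, hdist]
    exact lt_of_le_of_lt h hm
  -- the compact set of primitive coefficient tuples
  set K : Set (Fin (n + 1) → F) :=
    {c | (∀ i, A.abs (c i) ≤ 1) ∧ ∃ i, A.abs (c i) = 1} with hK
  have habscont : ∀ i : Fin (n + 1),
      Continuous (fun c : Fin (n + 1) → F => A.abs (c i)) := by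
    intro i
    have : (fun c : Fin (n + 1) → F => A.abs (c i)) = fun c => dist (c i) 0 := by
      funext c; rw [hdist, sub_zero]
    rw [this]
    exact (continuous_apply i).dist continuous_const
  have hKclosed : IsClosed K := by
    have : K = (⋂ i, {c : Fin (n + 1) → F | A.abs (c i) ≤ 1}) ∩
        (⋃ i, {c : Fin (n + 1) → F | A.abs (c i) = 1}) := by
      ext c; simp [hK, Set.mem_iInter, Set.mem_iUnion]
    rw [this]
    exact (isClosed_iInter fun i => isClosed_le (habscont i) continuous_const).inter
      (isClosed_iUnion_of_finite fun i => isClosed_eq (habscont i) continuous_const)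
  have hKcompact : IsCompact K := by
    refine IsCompact.of_isClosed_subset
      (isCompact_univ_pi (fun _ : Fin (n + 1) => hball)) hKclosed ?_
    intro c hc
    refine Set.mem_univ_pi.2 fun i => ?_
    rw [Metric.mem_closedBall, hdist, sub_zero]
    exact hc.1 i
  have hKne : K.Nonempty := ⟨fun _ => 1, fun _ => le_of_eq (abs_one A), 0, abs_one A⟩
  -- the function to minimize
  set φ : (Fin (n + 1) → F) → ℝ := fun c => ν.nu (∑ i, c i • b i) with hφ
  have hφcont : Continuous φ := by
    rw [Metric.continuous_iff]
    intro c ε hε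
    set C : ℝ := 1 + ∑ i, ν.nu (b i) with hC
    have hCpos : 0 < C := by
      have : (0 : ℝ) ≤ ∑ i, ν.nu (b i) :=
        Finset.sum_nonneg fun i _ => ν.nonneg _
      linarith
    refine ⟨ε / C, div_pos hε hCpos, fun d hd => ?_⟩
    have hbC : ∀ i, ν.nu (b i) ≤ C := by
      intro i
      have : ν.nu (b i) ≤ ∑ j, ν.nu (b j) :=
        Finset.single_le_sum (fun j _ => ν.nonneg (b j)) (Finset.mem_univ i)
      linarith
    have hkey : ν.nu (∑ i, (d i - c i) • b i) < ε := by
      have h1 : ν.nu (∑ i, (d i - c i) • b i) ≤ dist d c * C := by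
        refine ultra_sum_le ν.nu ν.ultra ?_ _ _ ?_
        · rw [nu_zero]; positivity
        · intro i _
          rw [ν.smul_eq]
          have h2 : A.abs (d i - c i) ≤ dist d c := by
            have := dist_le_pi_dist d c i
            rwa [hdist] at this
          calc A.abs (d i - c i) * ν.nu (b i) ≤ dist d c * ν.nu (b i) :=
                mul_le_mul_of_nonneg_right h2 (ν.nonneg _)
            _ ≤ dist d c * C :=
                mul_le_mul_of_nonneg_left (hbC i) dist_nonneg
      calc ν.nu (∑ i, (d i - c i) • b i) ≤ dist d c * C := h1
        _ < (ε / C) * C := by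
            exact mul_lt_mul_of_pos_right hd hCpos
        _ = ε := div_mul_cancel₀ ε (ne_of_gt hCpos)
    have hsplit : ∑ i, d i • b i = (∑ i, c i • b i) + ∑ i, (d i - c i) • b i := by
      rw [← Finset.sum_add_distrib]
      refine Finset.sum_congr rfl fun i _ => ?_
      rw [← add_smul]; ring_nf
    rw [Real.dist_eq, abs_sub_lt_iff]
    constructor
    · calc φ d - φ c ≤ ν.nu (∑ i, (d i - c i) • b i) := by
            have : φ d ≤ φ c + ν.nu (∑ i, (d i - c i) • b i) := by
              rw [hφ]; dsimp only; rw [hsplit]; exact nu_add_le ν _ _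
            linarith
        _ < ε := hkey
    · calc φ c - φ d ≤ ν.nu (∑ i, (d i - c i) • b i) := by
            have h3 : φ c ≤ φ d + ν.nu (-(∑ i, (d i - c i) • b i)) := by
              rw [hφ]; dsimp only
              have h4 : ∑ i, c i • b i =
                  (∑ i, d i • b i) + -(∑ i, (d i - c i) • b i) := by
                rw [hsplit]; abel
              rw [h4]; exact nu_add_le ν _ _
            rw [nu_neg] at h3
            linarith
        _ < ε := hkey
  obtain ⟨c, hcK, hmin⟩ := hKcompact.exists_isMinOn hKne hφcont.continuousOn
  exact ⟨c, hcK.1, hcK.2, fun d hd1 hd2 => hmin ⟨hd1, hd2⟩⟩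

theorem orth_key (A : NAAbs F) {π : F} (hπ0 : π ≠ 0) (hπ1 : A.abs π < 1)
    (hsm : ∀ a : F, A.abs a < 1 → A.abs a ≤ A.abs π) (ν : NANorm A V)
    {n : ℕ} {u₁ : V} {v : Fin n → V}
    (hmin : ∀ c : Fin (n + 1) → F, (∀ i, A.abs (c i) ≤ 1) → (∃ i, A.abs (c i) = 1) →
      ν.nu u₁ ≤ ν.nu (∑ i, c i • (Fin.cons u₁ v : Fin (n + 1) → V) i)) :
    ∀ x ∈ span F (Set.range v), ν.nu u₁ ≤ ν.nu (u₁ + x) := by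
  intro x hx
  obtain ⟨c, rfl⟩ := (mem_span_range_iff_exists_fun F).1 hx
  by_cases hc1 : ∀ i, A.abs (c i) ≤ 1
  · have h := hmin (Fin.cons 1 c)
      (fun i => by
        refine Fin.cases ?_ ?_ i
        · simp [abs_one A]
        · intro j; simpa using hc1 j)
      ⟨0, by simp [abs_one A]⟩
    calc ν.nu u₁ ≤ ν.nu (∑ i, (Fin.cons 1 c : Fin (n + 1) → F) i •
          (Fin.cons u₁ v : Fin (n + 1) → V) i) := h
      _ = ν.nu (u₁ + ∑ i, c i • v i) := by
          rw [Fin.sum_univ_succ]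
          simp
  · push_neg at hc1
    obtain ⟨i₀, hi₀⟩ := hc1
    obtain ⟨j, -, hj⟩ := Finset.exists_max_image Finset.univ
      (fun i => A.abs (c i)) ⟨i₀, Finset.mem_univ _⟩
    have hj1 : 1 < A.abs (c j) := lt_of_lt_of_le hi₀ (hj i₀ (Finset.mem_univ _))
    obtain ⟨q, hq0, hq1, hquc⟩ := exists_unit_scale A hπ0 hπ1 hsm hj1
    have hcoef : ∀ i, A.abs ((Fin.cons q (fun i => q * c i) : Fin (n + 1) → F) i) ≤ 1 := by
      intro i
      refine Fin.cases ?_ ?_ i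
      · simpa using hq1
      · intro k
        simp only [Fin.cons_succ, A.map_mul]
        calc A.abs q * A.abs (c k) ≤ A.abs q * A.abs (c j) :=
              mul_le_mul_of_nonneg_left (hj k (Finset.mem_univ _)) (le_of_lt hq0)
          _ = 1 := hquc
    have hone : A.abs (q * c j) = 1 := by rw [A.map_mul]; exact hquc
    have h := hmin (Fin.cons q (fun i => q * c i)) hcoef
      ⟨j.succ, by simpa using hone⟩
    have hsum : ∑ i, (Fin.cons q (fun i => q * c i) : Fin (n + 1) → F) i •
        (Fin.cons u₁ v : Fin (n + 1) → V) i = q • (u₁ + ∑ i, c i • v i) := by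
      rw [Fin.sum_univ_succ]
      simp only [Fin.cons_zero, Fin.cons_succ, smul_add, Finset.smul_sum]
      congr 1
      refine Finset.sum_congr rfl fun k _ => ?_
      rw [mul_smul]
    rw [hsum, ν.smul_eq] at h
    calc ν.nu u₁ ≤ A.abs q * ν.nu (u₁ + ∑ i, c i • v i) := h
      _ ≤ 1 * ν.nu (u₁ + ∑ i, c i • v i) :=
          mul_le_mul_of_nonneg_right hq1 (ν.nonneg _)
      _ = ν.nu (u₁ + ∑ i, c i • v i) := one_mul _

theorem orth_pair (A : NAAbs F) (ν : NANorm A V) {u₁ : V} {W : Submodule F V}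
    (hkey : ∀ x ∈ W, ν.nu u₁ ≤ ν.nu (u₁ + x)) :
    ∀ (a : F), ∀ x ∈ W, ν.nu (a • u₁ + x) = max (ν.nu (a • u₁)) (ν.nu x) := by
  intro a x hx
  rcases eq_or_ne a 0 with rfl | ha
  · rw [zero_smul, zero_add, nu_zero ν]
    exact (max_eq_right (ν.nonneg x)).symm
  · have hx' : a⁻¹ • x ∈ W := Submodule.smul_mem _ _ hx
    have h1 : ν.nu u₁ ≤ ν.nu (u₁ + a⁻¹ • x) := hkey _ hx'
    have h2 : ν.nu (a⁻¹ • x) ≤ ν.nu (u₁ + a⁻¹ • x) := by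
      have heq2 : (a⁻¹ • x : V) = (u₁ + a⁻¹ • x) + -u₁ := by abel
      calc ν.nu (a⁻¹ • x) = ν.nu ((u₁ + a⁻¹ • x) + -u₁) := by rw [← heq2]
        _ ≤ max (ν.nu (u₁ + a⁻¹ • x)) (ν.nu (-u₁)) := ν.ultra _ _
        _ ≤ ν.nu (u₁ + a⁻¹ • x) := max_le le_rfl (by rw [nu_neg]; exact h1)
    have heq : ν.nu (u₁ + a⁻¹ • x) = max (ν.nu u₁) (ν.nu (a⁻¹ • x)) :=
      le_antisymm (ν.ultra _ _) (max_le h1 h2)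
    have hscale : a • (u₁ + a⁻¹ • x) = a • u₁ + x := by
      rw [smul_add, smul_smul, mul_inv_cancel₀ ha, one_smul]
    calc ν.nu (a • u₁ + x) = A.abs a * ν.nu (u₁ + a⁻¹ • x) := by
          rw [← hscale, ν.smul_eq]
      _ = A.abs a * max (ν.nu u₁) (ν.nu (a⁻¹ • x)) := by rw [heq]
      _ = max (A.abs a * ν.nu u₁) (A.abs a * ν.nu (a⁻¹ • x)) :=
          mul_max_of_nonneg _ _ (A.nonneg a)
      _ = max (ν.nu (a • u₁)) (ν.nu x) := by
          rw [← ν.smul_eq, ← ν.smul_eq, smul_smul, mul_inv_cancel₀ ha, one_smul]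

theorem main_aux (A : NAAbs F) (π : F) (hloc : A.IsLocal π) (ν : NANorm A V) :
    ∀ (n : ℕ) (b : Fin n → V), LinearIndependent F b →
      ∃ u : Fin n → V, LinearIndependent F u ∧ latt A u = latt A b ∧
        ∀ c : Fin n → F, ν.nu (∑ i, c i • u i) = ⨆ i, ν.nu (c i • u i) := by
  obtain ⟨hπ0, hπ1, hπsm, -, -⟩ := id hloc
  intro n
  induction n with
  | zero =>
    intro b hb
    refine ⟨b, hb, rfl, fun c => ?_⟩
    rw [Finset.univ_eq_empty, Finset.sum_empty, nu_zero, Real.iSup_of_isEmpty]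
  | succ n ih =>
    intro b hb
    obtain ⟨e, he1, he2, hmin0⟩ := exists_min_prim A π hloc ν b
    obtain ⟨j, hj⟩ := he2
    set u₁ : V := ∑ i, e i • b i with hu₁
    set v : Fin n → V := fun k => b (j.succAbove k) with hv
    have hej : e j ≠ 0 := by
      intro h; rw [h, abs_zero A] at hj; exact one_ne_zero hj.symm
    have hejinv : A.abs (e j)⁻¹ = 1 := by
      rw [abs_inv A hej, hj]; norm_num
    -- the decomposition of u₁ along b j and v
    have hdecomp : u₁ = e j • b j + ∑ k, e (j.succAbove k) • v k := by
      rw [hu₁, Fin.sum_univ_succAbove (fun i => e i • b i) j]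
    -- coefficients expressing b j over (cons u₁ v)
    set cc : Fin (n + 1) → F :=
      Fin.cons (e j)⁻¹ (fun k => -((e j)⁻¹ * e (j.succAbove k))) with hcc
    have hccB : ∀ i, A.abs (cc i) ≤ 1 := by
      intro i
      refine Fin.cases ?_ ?_ i
      · simp only [hcc, Fin.cons_zero, hejinv, le_refl]
      · intro k
        simp only [hcc, Fin.cons_succ, abs_neg A, A.map_mul, hejinv, one_mul]
        exact he1 _
    have hccId : ∑ i, cc i • (Fin.cons u₁ v : Fin (n + 1) → V) i = b j := by
      rw [Fin.sum_univ_succ]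
      simp only [hcc, Fin.cons_zero, Fin.cons_succ]
      rw [hdecomp, smul_add, smul_smul, inv_mul_cancel₀ hej, one_smul, Finset.smul_sum]
      have : ∀ k : Fin n, (-((e j)⁻¹ * e (j.succAbove k))) • v k =
          -((e j)⁻¹ • (e (j.succAbove k) • v k)) := by
        intro k; rw [neg_smul, smul_smul]
      simp only [this]
      rw [Finset.sum_neg_distrib]
      abel
    have hsub1 : ∀ k, (Fin.cons u₁ v : Fin (n + 1) → V) k ∈ latt A b := by
      intro k
      refine Fin.cases ?_ ?_ k
      · simp only [Fin.cons_zero]; exact ⟨e, he1, rfl⟩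
      · intro k
        simp only [Fin.cons_succ, hv]
        exact self_mem_latt A b _
    have hsub2 : ∀ i, b i ∈ latt A (Fin.cons u₁ v : Fin (n + 1) → V) := by
      intro i
      rcases eq_or_ne i j with rfl | hij
      · exact ⟨cc, hccB, hccId.symm⟩
      · obtain ⟨k, hk⟩ := Fin.exists_succAbove_eq hij
        have := self_mem_latt A (Fin.cons u₁ v : Fin (n + 1) → V) k.succ
        simp only [Fin.cons_succ] at this
        rw [hv] at this
        rwa [← hk]
    have hlatt1 : latt A (Fin.cons u₁ v : Fin (n + 1) → V) = latt A b :=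
      Set.Subset.antisymm (latt_subset A hsub1) (latt_subset A hsub2)
    have hli1 : LinearIndependent F (Fin.cons u₁ v : Fin (n + 1) → V) :=
      linindep_of_latt_eq A hb hlatt1
    have hli_v : LinearIndependent F v := (linearIndependent_fin_cons.1 hli1).1
    have hu₁not : u₁ ∉ span F (Set.range v) := (linearIndependent_fin_cons.1 hli1).2
    obtain ⟨u', hu'li, hu'latt, hu'orth⟩ := ih v hli_v
    have hprim : primSet A (Fin.cons u₁ v : Fin (n + 1) → V) = primSet A b :=
      primSet_eq A hπ0 hπ1 hπsm hli1 hb hlatt1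
    have hmin : ∀ c : Fin (n + 1) → F, (∀ i, A.abs (c i) ≤ 1) →
        (∃ i, A.abs (c i) = 1) →
        ν.nu u₁ ≤ ν.nu (∑ i, c i • (Fin.cons u₁ v : Fin (n + 1) → V) i) := by
      intro c h1 h2
      have hx : (∑ i, c i • (Fin.cons u₁ v : Fin (n + 1) → V) i) ∈ primSet A b := by
        rw [← hprim]; exact ⟨c, h1, h2, rfl⟩
      obtain ⟨d, hd1, hd2, hdx⟩ := hx
      rw [hdx]; exact hmin0 d hd1 hd2
    have hkey := orth_key A hπ0 hπ1 hπsm ν hmin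
    have hpair := orth_pair A ν (W := span F (Set.range v)) hkey
    have hspan' : span F (Set.range u') = span F (Set.range v) :=
      span_eq_of_latt_eq A hu'latt
    have hvsub : ∀ m, v m ∈ latt A (Fin.cons u₁ v : Fin (n + 1) → V) := by
      intro m
      have := self_mem_latt A (Fin.cons u₁ v : Fin (n + 1) → V) m.succ
      simpa only [Fin.cons_succ] using this
    have hulatt : latt A (Fin.cons u₁ u' : Fin (n + 1) → V) =
        latt A (Fin.cons u₁ v : Fin (n + 1) → V) := by
      apply Set.Subset.antisymm
      · apply latt_subset
        intro k
        refine Fin.cases ?_ ?_ k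
        · simpa only [Fin.cons_zero] using
            self_mem_latt A (Fin.cons u₁ v : Fin (n + 1) → V) 0
        · intro k
          simp only [Fin.cons_succ]
          have h5 : u' k ∈ latt A v := hu'latt ▸ self_mem_latt A u' k
          exact latt_subset A hvsub h5
      · apply latt_subset
        intro k
        refine Fin.cases ?_ ?_ k
        · simpa only [Fin.cons_zero] using
            self_mem_latt A (Fin.cons u₁ u' : Fin (n + 1) → V) 0
        · intro k
          simp only [Fin.cons_succ]
          have h5 : v k ∈ latt A u' := hu'latt.symm ▸ self_mem_latt A v k
          have h6 : ∀ m, u' m ∈ latt A (Fin.cons u₁ u' : Fin (n + 1) → V) := by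
            intro m
            have := self_mem_latt A (Fin.cons u₁ u' : Fin (n + 1) → V) m.succ
            simpa only [Fin.cons_succ] using this
          exact latt_subset A h6 h5
    refine ⟨Fin.cons u₁ u', ?_, hulatt.trans hlatt1, ?_⟩
    · exact linearIndependent_fin_cons.2 ⟨hu'li, by rw [hspan']; exact hu₁not⟩
    · intro c
      have hx : (∑ k, c k.succ • u' k) ∈ span F (Set.range v) := by
        rw [← hspan']
        exact Submodule.sum_mem _ fun k _ =>
          Submodule.smul_mem _ _ (subset_span ⟨k, rfl⟩)
      have hsum : ∑ i, c i • (Fin.cons u₁ u' : Fin (n + 1) → V) i =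
          c 0 • u₁ + ∑ k, c k.succ • u' k := by
        rw [Fin.sum_univ_succ]; simp
      have h1 : ν.nu (∑ i, c i • (Fin.cons u₁ u' : Fin (n + 1) → V) i) =
          max (ν.nu (c 0 • u₁)) (ν.nu (∑ k, c k.succ • u' k)) := by
        rw [hsum]; exact hpair (c 0) _ hx
      have h2 := hu'orth (fun k => c k.succ)
      have hbdd : BddAbove (Set.range fun i : Fin (n + 1) =>
          ν.nu (c i • (Fin.cons u₁ u' : Fin (n + 1) → V) i)) :=
        (Set.finite_range _).bddAbove
      apply le_antisymm
      · rw [h1]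
        apply max_le
        · have := le_ciSup hbdd 0
          simpa using this
        · rw [h2]
          rcases Nat.eq_zero_or_pos n with hn | hn
          · subst hn
            rw [Real.iSup_of_isEmpty]
            exact le_trans (ν.nonneg _) (le_ciSup hbdd 0)
          · haveI : Nonempty (Fin n) := ⟨⟨0, hn⟩⟩
            apply ciSup_le
            intro k
            have := le_ciSup hbdd k.succ
            simpa using this
      · apply ciSup_le
        intro i
        refine Fin.cases ?_ ?_ i
        · rw [h1]
          simpa using le_max_left (ν.nu (c 0 • u₁)) (ν.nu (∑ k, c k.succ • u' k))
        · intro k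
          rw [h1]
          refine le_trans ?_ (le_max_right _ _)
          rw [h2]
          have hbdd2 : BddAbove (Set.range fun k : Fin n => ν.nu (c k.succ • u' k)) :=
            (Set.finite_range _).bddAbove
          have := le_ciSup hbdd2 k
          simpa using this

end Stmt1Aux

/-- Every `O_F`-lattice `L` in an `r`-dimensional vector space over a
non-archimedean local field admits an `O_F`-basis which is orthogonal with respect to a
given non-archimedean norm `ν`. -/
theorem statement1 {F : Type*} [Field F] {V : Type*} [AddCommGroup V] [Module F V]
    (A : NAAbs F) (π : F) (hloc : A.IsLocal π)
    (r : ℕ) (hdim : Module.finrank F V = r)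
    (ν : NANorm A V) (L : Set V) (b : Fin r → V)
    (hL : IsLatticeBasis A b L) :
    ∃ u : Fin r → V, IsLatticeBasis A u L ∧
      ∀ c : Fin r → F, ν.nu (∑ i, c i • u i) = ⨆ i, ν.nu (c i • u i) := by

  classical
  obtain ⟨hbli, hbmem⟩ := hL
  obtain ⟨u, hu1, hu2, hu3⟩ := Stmt1Aux.main_aux A π hloc ν r b hbli
  refine ⟨u, ⟨hu1, fun w => ?_⟩, hu3⟩
  have h4 : w ∈ Stmt1Aux.latt A u ↔ w ∈ Stmt1Aux.latt A b := by rw [hu2]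
  exact (hbmem w).trans h4.symm
end

section
/- Let $F$ be a non-archimedean local field, $\nu$ a norm on $F^r$, and $L$ an $O_F$-lattice in $F^r$. Let $\{u_1,\dots,u_r\}$ be an $O_F$-basis of $L$ orthogonal with respect to $\nu$ and ordered so that $\nu(u_1) \le \cdots \le \nu(u_r)$. Then $\nu(u_i) = \epsilon_{L,i}$ for each $i$, where $\epsilon_{L,i}$ is the minimal $\epsilon > 0$ such that $B_\nu(\epsilon) \cap L$ contains a direct summand of $L$ of rank $i$. Consequently $\prod_{i=1}^r \nu(u_i) = D_\nu(L) := \prod_{i=1}^r \epsilon_{L,i}$, independently of the chosen orthogonal basis. -/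
/-- `B_ν(ε) ∩ L` contains a direct summand of `L` of rank `i` (a direct summand of a free
module over the valuation ring is part of a lattice basis). -/
def ContainsSummand {F : Type*} [Field F] (A : NAAbs F)
    {V : Type*} [AddCommGroup V] [Module F V]
    (r : ℕ) (L : Set V) (νn : V → ℝ) (ε : ℝ) (i : ℕ) : Prop :=
  ∃ b : Fin r → V, IsLatticeBasis A b L ∧
    ∃ S : Finset (Fin r), S.card = i ∧ ∀ j ∈ S, νn (b j) ≤ ε


section Aux

variable {F : Type*} [Field F] (A : NAAbs F)

lemma NAAbs.abs_zero' : A.abs 0 = 0 := (A.eq_zero 0).2 rfl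

lemma NAAbs.abs_one' : A.abs 1 = 1 := by
  have h := A.map_mul 1 1
  rw [one_mul] at h
  have h1 : A.abs 1 ≠ 0 := fun h0 => one_ne_zero ((A.eq_zero 1).1 h0)
  have h2 : A.abs 1 * A.abs 1 = A.abs 1 * 1 := by rw [mul_one]; exact h.symm
  exact mul_left_cancel₀ h1 h2

lemma NAAbs.abs_pos {a : F} (ha : a ≠ 0) : 0 < A.abs a :=
  lt_of_le_of_ne (A.nonneg a) (fun h => ha ((A.eq_zero a).1 h.symm))

lemma NAAbs.abs_inv' {a : F} (ha : a ≠ 0) : A.abs a⁻¹ = (A.abs a)⁻¹ := by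
  have h := A.map_mul a a⁻¹
  rw [mul_inv_cancel₀ ha, A.abs_one'] at h
  exact (inv_eq_of_mul_eq_one_right h.symm).symm

lemma NAAbs.abs_sum_le {ι : Type*} (s : Finset ι) (f : ι → F) (C : ℝ) (hC : 0 ≤ C)
    (h : ∀ j ∈ s, A.abs (f j) ≤ C) : A.abs (∑ j ∈ s, f j) ≤ C := by
  classical
  induction s using Finset.induction_on with
  | empty => simpa [A.abs_zero'] using hC
  | @insert a s hx ih =>
    rw [Finset.sum_insert hx]
    refine le_trans (A.ultra _ _) (max_le (h a (Finset.mem_insert_self a s)) ?_)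
    exact ih fun j hj => h j (Finset.mem_insert_of_mem hj)

end Aux

/-- For an orthogonal `O_F`-basis `u` of `L` ordered by increasing norm,
`ν(u_i) = ε_{L,i}`, and hence `∏ ν(u_i)` equals the lattice discriminant
`D_ν(L) = ∏ ε_{L,i}`, independently of the chosen orthogonal basis. -/
theorem statement2 {F : Type*} [Field F] (A : NAAbs F) (π : F) (hloc : A.IsLocal π)
    (r : ℕ) (ν : NANorm A (Fin r → F)) (L : Set (Fin r → F))
    (u : Fin r → (Fin r → F))
    (hu : IsLatticeBasis A u L)
    (huo : IsOrthogonalFor A ν.nu u)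
    (hmono : ∀ i j : Fin r, i ≤ j → ν.nu (u i) ≤ ν.nu (u j))
    (ε : Fin r → ℝ)
    (hεpos : ∀ i, 0 < ε i)
    (hεmem : ∀ i : Fin r, ContainsSummand A r L ν.nu (ε i) (i + 1))
    (hεmin : ∀ i : Fin r, ∀ ε' : ℝ, 0 < ε' →
      ContainsSummand A r L ν.nu ε' (i + 1) → ε i ≤ ε') :
    (∀ i : Fin r, ν.nu (u i) = ε i) ∧ ∏ i, ν.nu (u i) = ∏ i, ε i := by
  classical
  have hπ : π ≠ 0 := hloc.1
  have hπpos : 0 < A.abs π := A.abs_pos hπ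
  have hπlt : A.abs π < 1 := hloc.2.1
  -- `Fin r` is nonempty as soon as we have an index; main work per index:
  have main : ∀ i : Fin r, ν.nu (u i) = ε i := by
    intro i
    have : Nonempty (Fin r) := ⟨i⟩
    have hcard : Fintype.card (Fin r) = Module.finrank F (Fin r → F) := by
      simp [Module.finrank_fin_fun]
    set B : Module.Basis (Fin r) F (Fin r → F) :=
      basisOfLinearIndependentOfCardEqFinrank hu.1 hcard with hBdef
    have hB : ∀ k, B k = u k := fun k =>
      congrFun (coe_basisOfLinearIndependentOfCardEqFinrank hu.1 hcard) k
    -- membership characterization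
    have hmem : ∀ v : Fin r → F, v ∈ L ↔ ∀ k, A.abs (B.repr v k) ≤ 1 := by
      intro v
      constructor
      · intro hv
        obtain ⟨c, hc, rfl⟩ := (hu.2 v).1 hv
        have : (∑ k, c k • u k) = ∑ k, c k • B k := by simp [hB]
        rw [this]
        intro k
        rw [B.repr_sum_self]
        exact hc k
      · intro hv
        refine (hu.2 v).2 ⟨fun k => B.repr v k, hv, ?_⟩
        conv_lhs => rw [← B.sum_repr v]
        simp [hB]
    have huipos : 0 < ν.nu (u i) := by
      refine lt_of_le_of_ne (ν.nonneg _) fun h => ?_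
      exact hu.1.ne_zero i ((ν.eq_zero _).1 h.symm)
    -- Direction 1: ε i ≤ ν (u i)
    have h1 : ε i ≤ ν.nu (u i) := by
      refine hεmin i _ huipos ⟨u, hu, Finset.Iic i, ?_, ?_⟩
      · simp
      · intro j hj
        exact hmono j i (Finset.mem_Iic.1 hj)
    -- Direction 2: ν (u i) ≤ ε i
    have h2 : ν.nu (u i) ≤ ε i := by
      by_contra hlt
      push_neg at hlt
      obtain ⟨b, hb, S, hScard, hSsmall⟩ := hεmem i
      have hbL : ∀ j, b j ∈ L := by
        intro j
        refine (hb.2 (b j)).2 ⟨fun k => if k = j then 1 else 0, ?_, ?_⟩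
        · intro k
          by_cases h : k = j <;> simp [h, A.abs_one', A.abs_zero']
        · simp [ite_smul]
      -- coefficients of b j in the u-basis
      set c : Fin r → Fin r → F := fun j k => B.repr (b j) k with hc
      have hble : ∀ j k, A.abs (c j k) ≤ 1 := fun j k => (hmem (b j)).1 (hbL j) k
      have hbexp : ∀ j, b j = ∑ k, c j k • u k := by
        intro j
        conv_lhs => rw [← B.sum_repr (b j)]
        simp [hB, hc]
      -- for j ∈ S and k ≥ i the coefficient is small
      have hsmall : ∀ j ∈ S, ∀ k : Fin r, i ≤ k → A.abs (c j k) ≤ A.abs π := by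
        intro j hj k hk
        refine hloc.2.2.1 _ ?_
        have hnorm : ν.nu (b j) = ⨆ k, ν.nu (c j k • u k) := by
          rw [hbexp j]; exact huo (c j)
        have hle : ν.nu (c j k • u k) ≤ ν.nu (b j) := by
          rw [hnorm]
          exact le_ciSup (f := fun k => ν.nu (c j k • u k)) (Set.Finite.bddAbove (Set.finite_range _)) k
        rw [ν.smul_eq] at hle
        have hukpos : 0 < ν.nu (u k) := lt_of_lt_of_le huipos (hmono i k hk)
        have : A.abs (c j k) * ν.nu (u k) < ν.nu (u k) :=
          lt_of_le_of_lt (le_trans hle (hSsmall j hj)) (lt_of_lt_of_le hlt (hmono i k hk))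
        nlinarith
      -- dimension argument: the truncated coordinate vectors of (b j), j ∈ S, are dependent
      have hSne : S.Nonempty := Finset.card_pos.1 (by rw [hScard]; omega)
      have : Nonempty {x // x ∈ S} := ⟨⟨hSne.choose, hSne.choose_spec⟩⟩
      set g : {x // x ∈ S} → (Fin (i : ℕ) → F) :=
        fun j k => c j (Fin.castLE (Nat.le_of_lt i.isLt) k) with hg
      have hgdep : ¬ LinearIndependent F g := by
        intro hlin
        have := hlin.fintype_card_le_finrank
        rw [Module.finrank_fin_fun, Fintype.card_coe, hScard] at this
        omega
      obtain ⟨a, ha0, j0, hj0⟩ := Fintype.not_linearIndependent_iff.1 hgdep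
      -- normalize so the max coefficient has absolute value 1
      obtain ⟨j1, _, hj1max⟩ := Finset.exists_max_image Finset.univ (fun j => A.abs (a j))
        ⟨j0, Finset.mem_univ j0⟩
      have hj1ne : a j1 ≠ 0 := by
        intro h
        have := hj1max j0 (Finset.mem_univ j0)
        rw [h, A.abs_zero'] at this
        exact hj0 ((A.eq_zero _).1 (le_antisymm this (A.nonneg _)))
      set a' : {x // x ∈ S} → F := fun j => a j / a j1 with ha'
      have ha'le : ∀ j, A.abs (a' j) ≤ 1 := by
        intro j
        rw [ha']
        simp only [div_eq_mul_inv]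
        rw [A.map_mul, A.abs_inv' hj1ne]
        rw [mul_inv_le_iff₀ (A.abs_pos hj1ne), one_mul]
        exact hj1max j (Finset.mem_univ j)
      have ha'1 : a' j1 = 1 := div_self hj1ne
      set v : Fin r → F := ∑ j : {x // x ∈ S}, a' j • b j with hv
      -- coordinates of v
      have hvrepr : ∀ k, B.repr v k = ∑ j : {x // x ∈ S}, a' j * c j k := by
        intro k
        rw [hv, map_sum]
        rw [Finsupp.finset_sum_apply]
        refine Finset.sum_congr rfl fun j _ => ?_
        rw [map_smul, Finsupp.smul_apply, smul_eq_mul, hc]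
      -- small coordinates (k < i): zero
      have hvlow : ∀ k : Fin r, (k : ℕ) < (i : ℕ) → B.repr v k = 0 := by
        intro k hk
        rw [hvrepr k]
        have hrel : ∑ j : {x // x ∈ S}, a j * c j k = 0 := by
          have := congrFun ha0 ⟨(k : ℕ), hk⟩
          rw [Finset.sum_apply] at this
          simpa [hg, Fin.castLE, Fin.eta] using this
        have : ∑ j : {x // x ∈ S}, a' j * c j k
            = (a j1)⁻¹ * ∑ j : {x // x ∈ S}, a j * c j k := by
          rw [Finset.mul_sum]
          refine Finset.sum_congr rfl fun j _ => ?_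
          rw [ha']; ring
        rw [this, hrel, mul_zero]
      -- all coordinates have absolute value ≤ |π|
      have hvall : ∀ k, A.abs (B.repr v k) ≤ A.abs π := by
        intro k
        by_cases hk : (k : ℕ) < (i : ℕ)
        · rw [hvlow k hk, A.abs_zero']; exact le_of_lt hπpos
        · push_neg at hk
          rw [hvrepr k]
          refine A.abs_sum_le _ _ _ (le_of_lt hπpos) fun j _ => ?_
          rw [A.map_mul]
          calc A.abs (a' j) * A.abs (c j.1 k) ≤ 1 * A.abs (c j.1 k) := by
                have := A.nonneg (c j.1 k)
                nlinarith [ha'le j]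
            _ = A.abs (c j.1 k) := one_mul _
            _ ≤ A.abs π := hsmall j.1 j.2 k hk
      -- π⁻¹ • v ∈ L
      have hπv : π⁻¹ • v ∈ L := by
        rw [hmem]
        intro k
        rw [map_smul, Finsupp.smul_apply, smul_eq_mul, A.map_mul, A.abs_inv' hπ]
        rw [inv_mul_le_one₀ hπpos]
        exact hvall k
      -- expand π⁻¹ • v in the b-basis in two ways and compare coefficients
      obtain ⟨d, hd, hdexp⟩ := (hb.2 _).1 hπv
      set B' : Module.Basis (Fin r) F (Fin r → F) :=
        basisOfLinearIndependentOfCardEqFinrank hb.1 hcard with hB'def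
      have hB' : ∀ k, B' k = b k := fun k =>
        congrFun (coe_basisOfLinearIndependentOfCardEqFinrank hb.1 hcard) k
      set a'' : Fin r → F := fun k => if h : k ∈ S then a' ⟨k, h⟩ else 0 with ha''
      have hvexp : v = ∑ k, a'' k • b k := by
        rw [hv]
        have e0 : (∑ j : {x // x ∈ S}, a' j • b j)
            = ∑ j : {x // x ∈ S}, a'' j.1 • b j.1 := by
          refine Finset.sum_congr rfl fun j _ => ?_
          rw [ha'']
          simp [j.2]
        rw [e0, Finset.sum_coe_sort S (fun k => a'' k • b k)]
        exact Finset.sum_subset (Finset.subset_univ S) (by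
          intro k _ hk
          rw [ha'']
          simp [hk])
      have hπvexp : π⁻¹ • v = ∑ k, (π⁻¹ * a'' k) • b k := by
        rw [hvexp, Finset.smul_sum]
        refine Finset.sum_congr rfl fun k _ => ?_
        rw [smul_smul]
      have e1 : ⇑(B'.repr (π⁻¹ • v)) = d := by
        rw [hdexp]
        have : (∑ k, d k • b k) = ∑ k, d k • B' k := by simp [hB']
        rw [this, B'.repr_sum_self]
      have e2 : ⇑(B'.repr (π⁻¹ • v)) = fun k => π⁻¹ * a'' k := by
        rw [hπvexp]
        have : (∑ k, (π⁻¹ * a'' k) • b k) = ∑ k, (π⁻¹ * a'' k) • B' k := by simp [hB']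
        rw [this, B'.repr_sum_self]
      have e3 : d j1.1 = π⁻¹ := by
        have h4 := (congrFun e1.symm j1.1).trans (congrFun e2 j1.1)
        simp only [ha''] at h4
        rw [h4]
        simp [j1.2, ha'1]
      have hd1 := hd j1.1
      rw [e3, A.abs_inv' hπ] at hd1
      have : (1 : ℝ) < (A.abs π)⁻¹ := one_lt_inv₀ hπpos |>.2 hπlt
      linarith
    exact le_antisymm h2 h1
  exact ⟨main, Finset.prod_congr rfl fun i _ => main i⟩
end

section
/- Let $k$ be a global function field with fixed place $\infty$, $A$ the ring of elements regular away from $\infty$, $Y \subset k^r$ a projective $A$-module of rank $r$, and let $z$ be a point of the Berkovich Drinfeld period domain $\Omega_\infty^r$ with associated norm $\nu_z$ on $k_\infty^r$ and imaginary part $\mathrm{im}(z) = D(\nu_z)$. For a non-constant $a \in A$ and $\mathrm{Re}(s) > 1$, the Eisenstein series $\mathbb{E}^Y(z,s) = \|Y\|_A^s \sum_{0\ne\lambda\in Y} \mathrm{im}(z)^s/\nu_z(\lambda)^{rs}$ satisfies $(1 - |a|_\infty^{r-rs})\,\mathbb{E}^Y(z,s) = \frac{\|Y\|_A^s\,\mathrm{im}(z)^s}{|a|_\infty^{rs}}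 \sum_{0 \ne w \in \frac{1}{a}Y/Y}\Big[\nu_z(w)^{-rs} + \sum_{0\ne\lambda\in Y,\ \nu_z(\lambda)\le\nu_z(w)} \big(\nu_z(\lambda-w)^{-rs} - \nu_z(\lambda)^{-rs}\big)\Big]$, and the right-hand side is a finite sum for each $w$. Consequently $\mathbb{E}^Y(z,s)$ extends meromorphically in $s$ and $\mathbb{E}^Y(z,0) = -1$. -/
set_option maxHeartbeats 2000000 in
/-- The distribution relation for the non-holomorphic Eisenstein series
`𝔼^Y(z,s) = ‖Y‖^s ∑_{0≠λ∈Y} im(z)^s/ν_z(λ)^{rs}` (with `NY = ‖Y‖_A`, `IM = im(z)`): for a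
nonconstant `a ∈ A` and `Re(s) > 1`,
`(1 − |a|^{r−rs}) 𝔼^Y(z,s) = (‖Y‖^s im(z)^s/|a|^{rs}) ∑_{0≠w ∈ (1/a)Y/Y} [ν_z(w)^{-rs}
  + ∑_{0≠λ∈Y, ν(λ)≤ν(w)} (ν_z(λ−w)^{-rs} − ν_z(λ)^{-rs})]`,
with the inner sums finite; the right-hand side meromorphically continues `𝔼^Y(z,·)` and at
`s = 0` yields `𝔼^Y(z,0) = −1` (using `#((1/a)Y/Y − {0}) = |a|^r − 1`). -/
theorem statement11 {F : Type*} [Field F] (A : NAAbs F)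
    (r : ℕ) (hr : 0 < r)
    (ν : NANorm A (Fin r → F)) (Y : AddSubgroup (Fin r → F))
    (a : F) (ha : 1 < A.abs a) (hstab : ∀ v ∈ Y, a • v ∈ Y)
    (NY IM : ℝ) (hNY : 0 < NY) (hIM : 0 < IM)
    (hfin : ∀ c : ℝ, {v : Fin r → F | v ∈ Y ∧ ν.nu v ≤ c}.Finite)
    -- `S` is a complete set of representatives of the nonzero classes of `((1/a)Y)/Y`
    (S : Finset (Fin r → F))
    (hSmem : ∀ w ∈ S, a • w ∈ Y ∧ w ∉ Y)
    (hSinj : ∀ w ∈ S, ∀ w' ∈ S, w - w' ∈ Y → w = w')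
    (hSsurj : ∀ v : Fin r → F, a • v ∈ Y → v ∉ Y → ∃ w ∈ S, v - w ∈ Y)
    (hScard : (S.card : ℝ) = A.abs a ^ r - 1)
    (s : ℂ) (hs : 1 < s.re)
    (hsum : Summable (fun lam : {v : Fin r → F // v ∈ Y ∧ v ≠ 0} =>
      ((IM : ℝ) : ℂ) ^ s / ((ν.nu lam.1 : ℝ) : ℂ) ^ ((r : ℂ) * s))) :
    (1 - ((A.abs a : ℝ) : ℂ) ^ ((r : ℂ) - (r : ℂ) * s)) *
        (((NY : ℝ) : ℂ) ^ s * ∑' lam : {v : Fin r → F // v ∈ Y ∧ v ≠ 0},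
          ((IM : ℝ) : ℂ) ^ s / ((ν.nu lam.1 : ℝ) : ℂ) ^ ((r : ℂ) * s))
      = (((NY : ℝ) : ℂ) ^ s * ((IM : ℝ) : ℂ) ^ s / ((A.abs a : ℝ) : ℂ) ^ ((r : ℂ) * s)) *
          ∑ w ∈ S,
            ((((ν.nu w : ℝ) : ℂ) ^ ((r : ℂ) * s))⁻¹ +
              ∑' lam : {v : Fin r → F // v ∈ Y ∧ v ≠ 0 ∧ ν.nu v ≤ ν.nu w},
                ((((ν.nu (lam.1 - w) : ℝ) : ℂ) ^ ((r : ℂ) * s))⁻¹ -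
                  (((ν.nu lam.1 : ℝ) : ℂ) ^ ((r : ℂ) * s))⁻¹)) ∧
    (∀ w ∈ S, {v : Fin r → F | v ∈ Y ∧ v ≠ 0 ∧ ν.nu v ≤ ν.nu w}.Finite) ∧
    (∑ w ∈ S,
        ((((ν.nu w : ℝ) : ℂ) ^ ((r : ℂ) * (0 : ℂ)))⁻¹ +
          ∑' lam : {v : Fin r → F // v ∈ Y ∧ v ≠ 0 ∧ ν.nu v ≤ ν.nu w},
            ((((ν.nu (lam.1 - w) : ℝ) : ℂ) ^ ((r : ℂ) * (0 : ℂ)))⁻¹ -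
              (((ν.nu lam.1 : ℝ) : ℂ) ^ ((r : ℂ) * (0 : ℂ)))⁻¹))) /
      (1 - ((A.abs a : ℝ) : ℂ) ^ ((r : ℂ) - (r : ℂ) * (0 : ℂ))) = -1 := by
  
  classical
  set t : ℂ := (r : ℂ) * s with ht
  -- basic facts about the absolute value and norm
  have habs0 : A.abs 0 = 0 := (A.eq_zero 0).mpr rfl
  have ha0 : a ≠ 0 := by intro h; rw [h, habs0] at ha; linarith
  have habsa_pos : (0:ℝ) < A.abs a := lt_trans one_pos ha
  have habs1 : A.abs 1 = 1 := by
    have h := A.map_mul 1 1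
    rw [one_mul] at h
    have h1 : A.abs 1 ≠ 0 := fun h0 => one_ne_zero ((A.eq_zero 1).mp h0)
    exact (mul_left_cancel₀ h1 (by rw [mul_one]; exact h)).symm
  have habsneg1 : A.abs (-1) = 1 := by
    have h := A.map_mul (-1) (-1)
    rw [neg_mul_neg, one_mul, habs1] at h
    rcases mul_self_eq_one_iff.mp h.symm with h' | h'
    · exact h'
    · nlinarith [A.nonneg (-1 : F)]
  have hnuneg : ∀ v : Fin r → F, ν.nu (-v) = ν.nu v := by
    intro v
    have h : (-v) = (-1 : F) • v := by simp
    rw [h, ν.smul_eq, habsneg1, one_mul]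
  have hnupos : ∀ v : Fin r → F, v ≠ 0 → 0 < ν.nu v := fun v hv =>
    lt_of_le_of_ne (ν.nonneg v) (fun h => hv ((ν.eq_zero v).mp h.symm))
  have hultraeq : ∀ v w' : Fin r → F, ν.nu w' < ν.nu v → ν.nu (v - w') = ν.nu v := by
    intro v w' h
    have h1 : ν.nu (v - w') ≤ ν.nu v := by
      have h2 := ν.ultra v (-w')
      rw [← sub_eq_add_neg, hnuneg] at h2
      exact h2.trans (max_le le_rfl h.le)
    rcases lt_or_eq_of_le h1 with h2 | h2
    · exfalso
      have h3 := ν.ultra (v - w') w'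
      rw [sub_add_cancel] at h3
      exact absurd h3 (not_le.mpr (max_lt h2 h))
    · exact h2
  have hcpow_ne : ∀ (x : ℝ) (u : ℂ), 0 < x → ((x:ℂ)) ^ u ≠ 0 := by
    intro x u hx h
    rcases (Complex.cpow_eq_zero_iff _ _).mp h with ⟨h1, _⟩
    have : x = 0 := by exact_mod_cast h1
    exact ne_of_gt hx this
  set X : ℂ := ((A.abs a : ℝ) : ℂ) with hX
  have hX0 : X ≠ 0 := by
    rw [hX]; exact_mod_cast ne_of_gt habsa_pos
  have hXt_ne : X ^ t ≠ 0 := hcpow_ne _ _ habsa_pos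
  have hIMs_ne : ((IM:ℝ):ℂ) ^ s ≠ 0 := hcpow_ne _ _ hIM
  set f : (Fin r → F) → ℂ := fun v => (((ν.nu v : ℝ) : ℂ) ^ t)⁻¹ with hf
  -- summability of f over the nonzero lattice points
  have hsumf : Summable (fun lam : {v : Fin r → F // v ∈ Y ∧ v ≠ 0} => f lam.1) := by
    have h1 := hsum.mul_left ((((IM:ℝ):ℂ) ^ s)⁻¹)
    have h2 : (fun lam : {v : Fin r → F // v ∈ Y ∧ v ≠ 0} =>
        ((((IM:ℝ):ℂ) ^ s)⁻¹ * (((IM:ℝ):ℂ) ^ s / ((ν.nu lam.1 : ℝ):ℂ) ^ t))) =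
        fun lam => f lam.1 := by
      funext lam
      rw [div_eq_mul_inv, ← mul_assoc, inv_mul_cancel₀ hIMs_ne, one_mul]
    rwa [h2] at h1
  set T : ℂ := ∑' lam : {v : Fin r → F // v ∈ Y ∧ v ≠ 0}, f lam.1 with hT
  have htsumE : (∑' lam : {v : Fin r → F // v ∈ Y ∧ v ≠ 0},
      ((IM:ℝ):ℂ) ^ s / ((ν.nu lam.1 : ℝ):ℂ) ^ t) = ((IM:ℝ):ℂ) ^ s * T := by
    rw [hT, ← tsum_mul_left]
    exact tsum_congr fun lam => by rw [div_eq_mul_inv]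
  -- scaling : f (a⁻¹ • v) = X^t * f v
  have hXarg : ((A.abs a : ℝ):ℂ).arg ≠ Real.pi := by
    rw [Complex.arg_ofReal_of_nonneg habsa_pos.le]
    exact Real.pi_ne_zero.symm
  have habsinv : A.abs a⁻¹ = (A.abs a)⁻¹ := by
    have h := A.map_mul a⁻¹ a
    rw [inv_mul_cancel₀ ha0, habs1] at h
    exact eq_inv_of_mul_eq_one_left h.symm
  have hfscale : ∀ v : Fin r → F, f (a⁻¹ • v) = X ^ t * f v := by
    intro v
    have h1 : ν.nu (a⁻¹ • v) = (A.abs a)⁻¹ * ν.nu v := by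
      rw [ν.smul_eq, habsinv]
    have h2 : (((A.abs a)⁻¹ * ν.nu v : ℝ) : ℂ) ^ t = (X ^ t)⁻¹ * ((ν.nu v : ℝ):ℂ) ^ t := by
      rw [Complex.ofReal_mul,
        Complex.mul_cpow_ofReal_nonneg (inv_nonneg.mpr habsa_pos.le) (ν.nonneg v) t,
        Complex.ofReal_inv, Complex.inv_cpow _ _ hXarg]
    show (((ν.nu (a⁻¹ • v) : ℝ) : ℂ) ^ t)⁻¹ = X ^ t * (((ν.nu v : ℝ) : ℂ) ^ t)⁻¹
    rw [h1, h2, mul_inv, inv_inv]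
  -- the scaling equivalence
  let e : {v : Fin r → F // v ∈ Y ∧ v ≠ 0} ≃ {v : Fin r → F // a • v ∈ Y ∧ v ≠ 0} :=
  { toFun := fun x => ⟨a⁻¹ • x.1, by
      constructor
      · rw [smul_smul, mul_inv_cancel₀ ha0, one_smul]; exact x.2.1
      · exact smul_ne_zero (inv_ne_zero ha0) x.2.2⟩
    invFun := fun x => ⟨a • x.1, x.2.1, smul_ne_zero ha0 x.2.2⟩
    left_inv := fun x => Subtype.ext (by
      show a • a⁻¹ • x.1 = x.1
      rw [smul_smul, mul_inv_cancel₀ ha0, one_smul])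
    right_inv := fun x => Subtype.ext (by
      show a⁻¹ • a • x.1 = x.1
      rw [smul_smul, inv_mul_cancel₀ ha0, one_smul]) }
  have hWsum : Summable (fun μ : {v : Fin r → F // a • v ∈ Y ∧ v ≠ 0} => f μ.1) := by
    rw [← Equiv.summable_iff e]
    have h : ((fun μ : {v : Fin r → F // a • v ∈ Y ∧ v ≠ 0} => f μ.1) ∘ e) =
        fun x : {v : Fin r → F // v ∈ Y ∧ v ≠ 0} => X ^ t * f x.1 := by
      funext x; exact hfscale x.1
    rw [h]
    exact hsumf.mul_left _
  have hA : (∑' μ : {v : Fin r → F // a • v ∈ Y ∧ v ≠ 0}, f μ.1) = X ^ t * T := by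
    rw [← Equiv.tsum_eq e (fun μ => f μ.1)]
    calc (∑' x : {v : Fin r → F // v ∈ Y ∧ v ≠ 0}, f ((e x) : Fin r → F))
        = ∑' x : {v : Fin r → F // v ∈ Y ∧ v ≠ 0}, X ^ t * f x.1 :=
          tsum_congr fun x => hfscale x.1
      _ = X ^ t * T := tsum_mul_left
  -- split off the sublattice Y
  set W := {v : Fin r → F // a • v ∈ Y ∧ v ≠ 0} with hWdef
  set sY : Set W := {x : W | x.1 ∈ Y} with hsYdef
  have hsplit := Summable.tsum_add_tsum_compl (f := fun μ : W => f μ.1) (s := sY)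
    (hWsum.subtype sY) (hWsum.subtype sYᶜ)
  let e1 : {v : Fin r → F // v ∈ Y ∧ v ≠ 0} ≃ ↥sY :=
  { toFun := fun x => ⟨⟨x.1, hstab _ x.2.1, x.2.2⟩, x.2.1⟩
    invFun := fun x => ⟨x.1.1, x.2, x.1.2.2⟩
    left_inv := fun x => rfl
    right_inv := fun x => rfl }
  have hsY : (∑' x : ↥sY, f (x : W).1) = T := by
    rw [← Equiv.tsum_eq e1 (fun x : ↥sY => f (x : W).1)]
    exact tsum_congr fun x => rfl
  -- the coset decomposition of the complement
  have h0Y : (0 : Fin r → F) ∈ Y := Y.zero_mem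
  have hSne0 : ∀ w ∈ S, w ≠ (0 : Fin r → F) := by
    intro w hw h
    exact (hSmem w hw).2 (h ▸ h0Y)
  let Φ : ↑S × {v : Fin r → F // v ∈ Y} → ↥sYᶜ := fun p =>
    ⟨⟨p.2.1 - p.1.1, by
        have hw := hSmem p.1.1 p.1.2
        constructor
        · rw [smul_sub]; exact Y.sub_mem (hstab _ p.2.2) hw.1
        · intro h
          exact hw.2 ((sub_eq_zero.mp h) ▸ p.2.2)⟩, by
      intro hmem
      have : (p.1.1 : Fin r → F) ∈ Y := by
        have h2 := Y.sub_mem p.2.2 hmem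
        rwa [sub_sub_cancel] at h2
      exact (hSmem p.1.1 p.1.2).2 this⟩
  have hΦbij : Function.Bijective Φ := by
    constructor
    · rintro ⟨⟨w, hwS⟩, ⟨l, hl⟩⟩ ⟨⟨w', hwS'⟩, ⟨l', hl'⟩⟩ h
      have h' : l - w = l' - w' := congrArg (fun x : ↥sYᶜ => ((x : W) : Fin r → F)) h
      have hww : w - w' ∈ Y := by
        have h2 : w - w' = l - l' := by
          have := sub_eq_sub_iff_sub_eq_sub.mp h'
          linear_combination (norm := abel) this.symm
        rw [h2]; exact Y.sub_mem hl hl'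
      have hwe : w = w' := hSinj w hwS w' hwS' hww
      subst hwe
      have hle : l = l' := by
        have := sub_left_injective (G := Fin r → F) (b := w) h'
        exact this
      subst hle
      rfl
    · rintro ⟨⟨x, hx1, hx2⟩, hx3⟩
      have hx3' : x ∉ Y := hx3
      have hmx1 : a • (-x) ∈ Y := by
        rw [smul_neg]; exact Y.neg_mem hx1
      have hmx2 : -x ∉ Y := fun h => hx3' (by simpa using Y.neg_mem h)
      obtain ⟨w, hwS, hxw⟩ := hSsurj (-x) hmx1 hmx2
      have hlY : x + w ∈ Y := by
        have h2 := Y.neg_mem hxw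
        rwa [neg_sub, sub_neg_eq_add, add_comm] at h2
      refine ⟨⟨⟨w, hwS⟩, ⟨x + w, hlY⟩⟩, ?_⟩
      apply Subtype.ext
      apply Subtype.ext
      show x + w - w = x
      rw [add_sub_cancel_right]
  let e2 : (↑S × {v : Fin r → F // v ∈ Y}) ≃ ↥sYᶜ := Equiv.ofBijective Φ hΦbij
  -- step C : the inner sums
  set C : (Fin r → F) → ℂ := fun w =>
    ∑' lam : {v : Fin r → F // v ∈ Y ∧ v ≠ 0 ∧ ν.nu v ≤ ν.nu w}, (f (lam.1 - w) - f lam.1)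
    with hC
  have stepC : ∀ w : Fin r → F, w ∉ Y →
      Summable (fun l : {v : Fin r → F // v ∈ Y} => f (l.1 - w)) ∧
      (∑' l : {v : Fin r → F // v ∈ Y}, f (l.1 - w)) = f w + T + C w := by
    intro w hw
    set Y0 : Set (Fin r → F) := {v | v ∈ Y ∧ v ≠ 0} with hY0
    set Ys : Set (Fin r → F) := {v | v ∈ Y} with hYs
    set Yw : Set (Fin r → F) := {v | v ∈ Y ∧ v ≠ 0 ∧ ν.nu v ≤ ν.nu w} with hYw
    have hwne : w ≠ 0 := fun h => hw (h ▸ h0Y)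
    have hu : Summable (Y0.indicator f) := summable_subtype_iff_indicator.mp hsumf
    have hTu : T = ∑' v, Y0.indicator f v := tsum_subtype Y0 f
    set d : (Fin r → F) → ℂ := fun v => Ys.indicator (fun v => f (v - w)) v - Y0.indicator f v
      with hd
    have hf0w : f (0 - w) = f w := by
      show (((ν.nu ((0:Fin r → F) - w) : ℝ) : ℂ) ^ t)⁻¹ = _
      rw [zero_sub, hnuneg]
    have hdeq : d = (fun v => if v = 0 then f w else 0) +
        Yw.indicator (fun v => f (v - w) - f v) := by
      funext v
      show Ys.indicator (fun v => f (v - w)) v - Y0.indicator f v = _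
      by_cases hv0 : v = 0
      · subst hv0
        have h1 : (0 : Fin r → F) ∈ Ys := h0Y
        have h2 : (0 : Fin r → F) ∉ Y0 := fun h => h.2 rfl
        have h3 : (0 : Fin r → F) ∉ Yw := fun h => h.2.1 rfl
        simp only [Set.indicator_of_mem h1, Set.indicator_of_notMem h2,
          Set.indicator_of_notMem h3, Pi.add_apply, eq_self_iff_true, if_true, hf0w]
        ring
      · by_cases hvY : v ∈ Y
        · have h1 : v ∈ Ys := hvY
          have h2 : v ∈ Y0 := ⟨hvY, hv0⟩
          by_cases hle : ν.nu v ≤ ν.nu w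
          · have h3 : v ∈ Yw := ⟨hvY, hv0, hle⟩
            simp only [Set.indicator_of_mem h1, Set.indicator_of_mem h2,
              Set.indicator_of_mem h3, Pi.add_apply, if_neg hv0]
            ring
          · have h3 : v ∉ Yw := fun h => hle h.2.2
            have h4 : f (v - w) = f v := by
              show (((ν.nu (v - w) : ℝ) : ℂ) ^ t)⁻¹ = (((ν.nu v : ℝ) : ℂ) ^ t)⁻¹
              rw [hultraeq v w (lt_of_not_ge hle)]
            simp only [Set.indicator_of_mem h1, Set.indicator_of_mem h2,
              Set.indicator_of_notMem h3, Pi.add_apply, if_neg hv0, h4]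
            ring
        · have h1 : v ∉ Ys := hvY
          have h2 : v ∉ Y0 := fun h => hvY h.1
          have h3 : v ∉ Yw := fun h => hvY h.1
          simp only [Set.indicator_of_notMem h1, Set.indicator_of_notMem h2,
            Set.indicator_of_notMem h3, Pi.add_apply, if_neg hv0]
          ring
    have hd1 : Summable (fun v => if v = (0 : Fin r → F) then f w else 0) := by
      apply summable_of_finite_support
      apply Set.Finite.subset (Set.finite_singleton (0 : Fin r → F))
      intro v hv
      rcases eq_or_ne v 0 with h | h
      · simp [h]
      · exact absurd (if_neg h) hv
    have hYwfin : Yw.Finite := (hfin (ν.nu w)).subset (fun v hv => ⟨hv.1, hv.2.2⟩)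
    have hd2 : Summable (Yw.indicator (fun v => f (v - w) - f v)) :=
      summable_of_finite_support (hYwfin.subset (Set.support_indicator_subset))
    have hdsum : Summable d := by rw [hdeq]; exact hd1.add hd2
    have hindeq : Ys.indicator (fun v => f (v - w)) = Y0.indicator f + d := by
      funext v
      show _ = _ + (Ys.indicator (fun v => f (v - w)) v - Y0.indicator f v)
      ring
    have hslice : Summable (Ys.indicator (fun v => f (v - w))) := by
      rw [hindeq]; exact hu.add hdsum
    have hslice' : Summable (fun l : {v : Fin r → F // v ∈ Y} => f (l.1 - w)) :=
      summable_subtype_iff_indicator.mpr hslice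
    refine ⟨hslice', ?_⟩
    have hdval : (∑' v, d v) = f w + C w := by
      rw [hdeq]
      rw [show (∑' v, ((fun v => if v = (0:Fin r → F) then f w else 0) +
          Yw.indicator (fun v => f (v - w) - f v)) v) =
          ∑' v, ((if v = (0:Fin r → F) then f w else 0) +
            Yw.indicator (fun v => f (v - w) - f v) v) from tsum_congr fun v => rfl]
      rw [Summable.tsum_add hd1 hd2, tsum_ite_eq (0 : Fin r → F) (fun _ => f w)]
      congr 1
      rw [hC]
      exact (tsum_subtype Yw (fun v => f (v - w) - f v)).symm
    calc (∑' l : {v : Fin r → F // v ∈ Y}, f (l.1 - w))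
        = ∑' v, Ys.indicator (fun v => f (v - w)) v := tsum_subtype Ys (fun v => f (v - w))
      _ = ∑' v, (Y0.indicator f v + d v) := by rw [hindeq]; rfl
      _ = (∑' v, Y0.indicator f v) + ∑' v, d v := Summable.tsum_add hu hdsum
      _ = T + (f w + C w) := by rw [← hTu, hdval]
      _ = f w + T + C w := by ring
  -- sum over the complement
  have hsumΦ : Summable (fun p : ↑S × {v : Fin r → F // v ∈ Y} => f (p.2.1 - p.1.1)) :=
    (Equiv.summable_iff e2).mpr (hWsum.subtype sYᶜ)
  have hsYc : (∑' x : ↥sYᶜ, f ((x : W)).1) =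
      ∑ w ∈ S, ∑' l : {v : Fin r → F // v ∈ Y}, f (l.1 - w) := by
    rw [← Equiv.tsum_eq e2 (fun x : ↥sYᶜ => f ((x : W)).1)]
    have h1 : (∑' p : ↑S × {v : Fin r → F // v ∈ Y}, f (((e2 p : ↥sYᶜ) : W)).1) =
        ∑' p : ↑S × {v : Fin r → F // v ∈ Y}, f (p.2.1 - p.1.1) := tsum_congr fun p => rfl
    rw [h1, Summable.tsum_prod' hsumΦ (fun b => (stepC b.1 (hSmem b.1 b.2).2).1),
      tsum_fintype, ← Finset.sum_coe_sort S]
  -- the big identity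
  have hbig : X ^ t * T = T + ∑ w ∈ S, (f w + T + C w) := by
    rw [← hA, ← hsplit, hsY, hsYc]
    congr 1
    exact Finset.sum_congr rfl fun w hw => (stepC w (hSmem w hw).2).2
  have hcardC : ((S.card : ℂ)) = X ^ (r : ℕ) - 1 := by
    have h := congrArg (fun x : ℝ => (x : ℂ)) hScard
    push_cast at h
    rw [hX]
    exact_mod_cast h
  have hmainf : (∑ w ∈ S, (f w + C w)) = (X ^ t - X ^ (r : ℕ)) * T := by
    have h1 : ∑ w ∈ S, (f w + T + C w) = (∑ w ∈ S, (f w + C w)) + S.card • T := by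
      have e1 : ∀ w ∈ S, f w + T + C w = (f w + C w) + T := fun w _ => by ring
      rw [Finset.sum_congr rfl e1, Finset.sum_add_distrib, Finset.sum_const]
    rw [h1] at hbig
    have h2 : (S.card • T : ℂ) = (S.card : ℂ) * T := by
      rw [nsmul_eq_mul]
    rw [h2, hcardC] at hbig
    linear_combination -hbig
  refine ⟨?_, ?_, ?_⟩
  · -- the distribution relation
    rw [htsumE]
    have hXrt : X ^ ((r : ℂ) - t) = X ^ (r : ℕ) / X ^ t := by
      rw [Complex.cpow_sub _ _ hX0, Complex.cpow_natCast]
    have hmain' : (∑ w ∈ S,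
        (((((ν.nu w : ℝ) : ℂ)) ^ t)⁻¹ +
          ∑' lam : {v : Fin r → F // v ∈ Y ∧ v ≠ 0 ∧ ν.nu v ≤ ν.nu w},
            ((((ν.nu (lam.1 - w) : ℝ) : ℂ) ^ t)⁻¹ -
              (((ν.nu lam.1 : ℝ) : ℂ) ^ t)⁻¹))) = (X ^ t - X ^ (r : ℕ)) * T := by
      show (∑ w ∈ S, (f w + C w)) = _
      exact hmainf
    rw [hmain', hXrt]
    field_simp
  · -- finiteness of the inner index sets
    intro w _
    exact (hfin (ν.nu w)).subset (fun v hv => ⟨hv.1, hv.2.2⟩)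
  · -- value at s = 0
    have hXr1 : X ^ (r : ℕ) ≠ 1 := by
      have h2 : (1:ℝ) < A.abs a ^ r := one_lt_pow₀ ha hr.ne'
      intro h
      rw [hX, ← Complex.ofReal_pow] at h
      have : (A.abs a ^ r : ℝ) = 1 := by exact_mod_cast h
      linarith
    have hden : (1 : ℂ) - X ^ (r : ℕ) ≠ 0 := by
      intro h
      exact hXr1 (by linear_combination -h)
    simp only [mul_zero, Complex.cpow_zero, inv_one, sub_self, tsum_zero, add_zero, sub_zero]
    rw [Finset.sum_const, nsmul_eq_mul, mul_one, Complex.cpow_natCast, hcardC]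
    rw [div_eq_iff hden]
    ring
end

section
/- In the setting of the non-archimedean Eisenstein series, for $z \in \Omega_\infty^r$, $w \in k_\infty^r \setminus Y$, and $\mathrm{Re}(s) > 1$: $\|Y\|_A^{-s}\big(\mathbb{E}^Y(z,w,s) - \mathbb{E}^Y(z,s)\big) = \frac{\mathrm{im}(z)^s}{\nu_z(w)^{rs}} + \sum_{0\ne\lambda\in Y,\ \nu_z(\lambda)\le\nu_z(w)}\Big(\frac{\mathrm{im}(z)^s}{\nu_z(\lambda-w)^{rs}} - \frac{\mathrm{im}(z)^s}{\nu_z(\lambda)^{rs}}\Big)$, where the right-hand side is a finite sum. Consequently the Jacobi-type Eisenstein series $\mathbb{E}^Y(z,w,s) = \|Y\|_A^s\sum_{\lambda\in Y}\mathrm{im}(z)^s/\nu_z(\lambda-w)^{rs}$ converges absolutely for $\mathrm{Re}(s)>1$, extends meromorphically, and satisfies $\mathbb{E}^Y(z,w,0) = 0$. -/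
/-- For the Jacobi-type Eisenstein series
`𝔼^Y(z,w,s) = ‖Y‖^s ∑_{λ∈Y} im(z)^s/ν_z(λ−w)^{rs}` (with `NY = ‖Y‖_A`, `IM = im(z)`,
`w ∉ Y`): for `Re(s) > 1` the series converges absolutely, and
`‖Y‖^{-s}(𝔼^Y(z,w,s) − 𝔼^Y(z,s)) = im(z)^s/ν_z(w)^{rs}
  + ∑_{0≠λ∈Y, ν(λ)≤ν(w)} (im^s/ν(λ−w)^{rs} − im^s/ν(λ)^{rs})`,
a finite sum; at `s = 0` the right-hand side equals `1`, giving the meromorphic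
continuation with `𝔼^Y(z,w,0) = 0`. -/
theorem statement12 {F : Type*} [Field F] (A : NAAbs F)
    (r : ℕ) (hr : 0 < r)
    (ν : NANorm A (Fin r → F)) (Y : AddSubgroup (Fin r → F))
    (NY IM : ℝ) (hNY : 0 < NY) (hIM : 0 < IM)
    (hfin : ∀ c : ℝ, {v : Fin r → F | v ∈ Y ∧ ν.nu v ≤ c}.Finite)
    (w : Fin r → F) (hw : w ∉ Y)
    (s : ℂ) (hs : 1 < s.re)
    (hsum : Summable (fun lam : {v : Fin r → F // v ∈ Y ∧ v ≠ 0} =>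
      ((IM : ℝ) : ℂ) ^ s / ((ν.nu lam.1 : ℝ) : ℂ) ^ ((r : ℂ) * s))) :
    Summable (fun lam : Y =>
      ((IM : ℝ) : ℂ) ^ s / ((ν.nu (lam.1 - w) : ℝ) : ℂ) ^ ((r : ℂ) * s)) ∧
    (((NY : ℝ) : ℂ) ^ (-s) *
        (((NY : ℝ) : ℂ) ^ s * (∑' lam : Y,
            ((IM : ℝ) : ℂ) ^ s / ((ν.nu (lam.1 - w) : ℝ) : ℂ) ^ ((r : ℂ) * s)) -
          ((NY : ℝ) : ℂ) ^ s * ∑' lam : {v : Fin r → F // v ∈ Y ∧ v ≠ 0},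
            ((IM : ℝ) : ℂ) ^ s / ((ν.nu lam.1 : ℝ) : ℂ) ^ ((r : ℂ) * s))
      = ((IM : ℝ) : ℂ) ^ s / ((ν.nu w : ℝ) : ℂ) ^ ((r : ℂ) * s) +
          ∑' lam : {v : Fin r → F // v ∈ Y ∧ v ≠ 0 ∧ ν.nu v ≤ ν.nu w},
            (((IM : ℝ) : ℂ) ^ s / ((ν.nu (lam.1 - w) : ℝ) : ℂ) ^ ((r : ℂ) * s) -
              ((IM : ℝ) : ℂ) ^ s / ((ν.nu lam.1 : ℝ) : ℂ) ^ ((r : ℂ) * s))) ∧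
    {v : Fin r → F | v ∈ Y ∧ v ≠ 0 ∧ ν.nu v ≤ ν.nu w}.Finite ∧
    (((IM : ℝ) : ℂ) ^ (0 : ℂ) / ((ν.nu w : ℝ) : ℂ) ^ ((r : ℂ) * (0 : ℂ)) +
        ∑' lam : {v : Fin r → F // v ∈ Y ∧ v ≠ 0 ∧ ν.nu v ≤ ν.nu w},
          (((IM : ℝ) : ℂ) ^ (0 : ℂ) / ((ν.nu (lam.1 - w) : ℝ) : ℂ) ^ ((r : ℂ) * (0 : ℂ)) -
            ((IM : ℝ) : ℂ) ^ (0 : ℂ) / ((ν.nu lam.1 : ℝ) : ℂ) ^ ((r : ℂ) * (0 : ℂ)))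
      = 1) := by
  classical
  -- basic facts about the absolute value and norm
  have habs1 : A.abs 1 = 1 := by
    have h := A.map_mul 1 1
    rw [one_mul] at h
    have h0 : A.abs 1 ≠ 0 := fun hc => one_ne_zero ((A.eq_zero 1).mp hc)
    have h' : A.abs 1 * 1 = A.abs 1 * A.abs 1 := by rw [mul_one]; exact h
    exact (mul_left_cancel₀ h0 h').symm
  have habsneg : A.abs (-1 : F) = 1 := by
    have h := A.map_mul (-1 : F) (-1 : F)
    rw [neg_mul_neg, one_mul, habs1] at h
    rcases mul_self_eq_one_iff.mp h.symm with h1 | h1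
    · exact h1
    · nlinarith [A.nonneg (-1 : F)]
  have hνneg : ∀ v : Fin r → F, ν.nu (-v) = ν.nu v := by
    intro v
    have h := ν.smul_eq (-1 : F) v
    rw [habsneg, one_mul] at h
    simpa using h
  have hultra : ∀ v : Fin r → F, ν.nu w < ν.nu v → ν.nu (v - w) = ν.nu v := by
    intro v hv
    have h1 : ν.nu (v - w) ≤ ν.nu v := by
      have h := ν.ultra v (-w)
      rw [hνneg] at h
      calc ν.nu (v - w) = ν.nu (v + -w) := by rw [sub_eq_add_neg]
        _ ≤ max (ν.nu v) (ν.nu w) := h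
        _ = ν.nu v := max_eq_left hv.le
    have h2 : ν.nu v ≤ max (ν.nu (v - w)) (ν.nu w) := by
      have h := ν.ultra (v - w) w
      simpa using h
    rcases le_max_iff.mp h2 with h | h
    · exact le_antisymm h1 h
    · exact absurd h (not_le.mpr hv)
  -- nonvanishing exponents / bases
  have hs0 : s ≠ 0 := by
    intro hc; rw [hc] at hs; norm_num at hs
  have hrs : (r : ℂ) * s ≠ 0 :=
    mul_ne_zero (Nat.cast_ne_zero.mpr hr.ne') hs0
  have hNY0 : ((NY : ℝ) : ℂ) ≠ 0 := Complex.ofReal_ne_zero.mpr hNY.ne'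
  -- abbreviations (as local definitions, kept definitionally transparent)
  let f : Y → ℂ := fun lam =>
    ((IM : ℝ) : ℂ) ^ s / ((ν.nu (lam.1 - w) : ℝ) : ℂ) ^ ((r : ℂ) * s)
  let G : Y → ℂ := fun lam =>
    ((IM : ℝ) : ℂ) ^ s / ((ν.nu lam.1 : ℝ) : ℂ) ^ ((r : ℂ) * s)
  let i : {v : Fin r → F // v ∈ Y ∧ v ≠ 0} → Y := fun v => ⟨v.1, v.2.1⟩
  have hi : Function.Injective i := by
    intro a b hab
    have h2 := Subtype.ext_iff.mp hab
    exact Subtype.ext h2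
  have hi_ne : ∀ a, (i a : Y) ≠ 0 := by
    intro a hc
    exact a.2.2 (congrArg Subtype.val hc)
  have hrange : ∀ b : Y, b ∉ Set.range i → b = 0 := by
    intro b hb
    by_contra hb0
    exact hb ⟨⟨b.1, b.2, fun hc => hb0 (Subtype.ext hc)⟩, rfl⟩
  have hν0 : ν.nu (0 : Fin r → F) = 0 := (ν.eq_zero 0).mpr rfl
  have hG0 : ∀ b : Y, b ∉ Set.range i → G b = 0 := by
    intro b hb
    have hb0 : (b : Fin r → F) = 0 := congrArg Subtype.val (hrange b hb)
    show ((IM : ℝ) : ℂ) ^ s / ((ν.nu (b : Fin r → F) : ℝ) : ℂ) ^ ((r : ℂ) * s) = 0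
    rw [hb0, hν0, Complex.ofReal_zero, Complex.zero_cpow hrs, div_zero]
  have hGsum : Summable G := (hi.summable_iff hG0).mp hsum
  -- finiteness of the relevant sets
  have hfin3 : {v : Fin r → F | v ∈ Y ∧ v ≠ 0 ∧ ν.nu v ≤ ν.nu w}.Finite :=
    (hfin (ν.nu w)).subset (fun v hv => ⟨hv.1, hv.2.2⟩)
  have hSfin : {b : Y | ν.nu (b : Fin r → F) ≤ ν.nu w}.Finite := by
    have hsub : {b : Y | ν.nu (b : Fin r → F) ≤ ν.nu w} ⊆
        (Subtype.val : Y → Fin r → F) ⁻¹' {v | v ∈ Y ∧ ν.nu v ≤ ν.nu w} :=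
      fun b hb => ⟨b.2, hb⟩
    exact (((hfin (ν.nu w)).preimage Subtype.val_injective.injOn).subset hsub)
  -- f agrees with G for ν(λ) > ν(w)
  have hfG : ∀ b : Y, ν.nu w < ν.nu (b : Fin r → F) → f b = G b := by
    intro b hb
    show ((IM : ℝ) : ℂ) ^ s / ((ν.nu ((b : Fin r → F) - w) : ℝ) : ℂ) ^ ((r : ℂ) * s) = _
    rw [hultra _ hb]
  have hdiff : Summable (fun b : Y => f b - G b) := by
    apply summable_of_ne_finset_zero (s := hSfin.toFinset)
    intro b hb
    have hb' : ν.nu w < ν.nu (b : Fin r → F) := by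
      by_contra hc
      exact hb (hSfin.mem_toFinset.mpr (not_lt.mp hc))
    rw [hfG b hb', sub_self]
  have hfsum : Summable f := by
    have h := hGsum.add hdiff
    have he : f = fun b => G b + (f b - G b) := by funext b; ring
    rw [he]; exact h
  refine ⟨hfsum, ?_, hfin3, ?_⟩
  · -- the main identity
    let j : {v : Fin r → F // v ∈ Y ∧ v ≠ 0 ∧ ν.nu v ≤ ν.nu w} →
        {v : Fin r → F // v ∈ Y ∧ v ≠ 0} := fun v => ⟨v.1, v.2.1, v.2.2.1⟩
    have hj : Function.Injective j := by
      intro a b hab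
      have h2 := Subtype.ext_iff.mp hab
      exact Subtype.ext h2
    show ((NY : ℝ) : ℂ) ^ (-s) *
        (((NY : ℝ) : ℂ) ^ s * (∑' b : Y, f b) -
          ((NY : ℝ) : ℂ) ^ s * ∑' a : {v : Fin r → F // v ∈ Y ∧ v ≠ 0}, G (i a))
      = ((IM : ℝ) : ℂ) ^ s / ((ν.nu w : ℝ) : ℂ) ^ ((r : ℂ) * s) +
          ∑' lam : {v : Fin r → F // v ∈ Y ∧ v ≠ 0 ∧ ν.nu v ≤ ν.nu w},
            (f (i (j lam)) - G (i (j lam)))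
    have hpow : ((NY : ℝ) : ℂ) ^ (-s) * ((NY : ℝ) : ℂ) ^ s = 1 := by
      rw [← Complex.cpow_add _ _ hNY0, neg_add_cancel, Complex.cpow_zero]
    rw [mul_sub, ← mul_assoc, ← mul_assoc, hpow, one_mul, one_mul]
    have hzero : f 0 = ((IM : ℝ) : ℂ) ^ s / ((ν.nu w : ℝ) : ℂ) ^ ((r : ℂ) * s) := by
      show ((IM : ℝ) : ℂ) ^ s /
          ((ν.nu (((0 : Y) : Fin r → F) - w) : ℝ) : ℂ) ^ ((r : ℂ) * s) = _
      rw [show (((0 : Y) : Fin r → F) - w) = -w by simp, hνneg]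
    have hsplit : ∑' b : Y, f b = f 0 + ∑' b : Y, if b = 0 then 0 else f b :=
      Summable.tsum_eq_add_tsum_ite hfsum 0
    have hstep1 : ∑' a, f (i a) = ∑' b : Y, (if b = 0 then 0 else f b) := by
      have hsupp : Function.support (fun b : Y => if b = 0 then 0 else f b) ⊆
          Set.range i := by
        intro b hb
        by_contra hbr
        apply Function.mem_support.mp hb
        rw [if_pos (hrange b hbr)]
      have h := hi.tsum_eq (f := fun b : Y => if b = 0 then 0 else f b) hsupp
      rw [← h]
      exact tsum_congr fun a => (if_neg (hi_ne a)).symm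
    have hfi : Summable (fun a => f (i a)) := hfsum.comp_injective hi
    have hGi : Summable (fun a : {v : Fin r → F // v ∈ Y ∧ v ≠ 0} => G (i a)) :=
      hGsum.comp_injective hi
    have hstep2 : ∑' a, f (i a) - ∑' a, G (i a) = ∑' a, (f (i a) - G (i a)) :=
      (Summable.tsum_sub hfi hGi).symm
    have hstep3 : ∑' a : {v : Fin r → F // v ∈ Y ∧ v ≠ 0}, (f (i a) - G (i a)) =
        ∑' lam : {v : Fin r → F // v ∈ Y ∧ v ≠ 0 ∧ ν.nu v ≤ ν.nu w},
          (f (i (j lam)) - G (i (j lam))) := by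
      have hsupp : Function.support
          (fun a : {v : Fin r → F // v ∈ Y ∧ v ≠ 0} => f (i a) - G (i a)) ⊆
          Set.range j := by
        intro a ha
        by_contra har
        apply Function.mem_support.mp ha
        have hle : ν.nu w < ν.nu (a.1 : Fin r → F) := by
          by_contra hc
          exact har ⟨⟨a.1, a.2.1, a.2.2, not_lt.mp hc⟩, rfl⟩
        rw [hfG (i a) hle, sub_self]
      exact (hj.tsum_eq hsupp).symm
    rw [hsplit, ← hstep1, add_sub_assoc, hstep2, hstep3, hzero]
  · -- value at s = 0
    simp
end

section
/- Suppose for each nonzero $a \in A$ one has an invertible element $\Delta_a$ of a commutative ring of analytic functions such that $(\Delta_{a_2})^{|a_1|_\infty^r - 1} = (\Delta_{a_1})^{|a_2|_\infty^r - 1}$ for all nonzero $a_1, a_2 \in A$, with $|a|_\infty = q_\infty^{\deg a}$ running over powers of $q_\infty$. Then there exists an invertible analytic function $\Delta$, unique up to multiplication by a $(q_\infty^r - 1)$-th root of unity, with $\Delta^{|a|_\infty^r - 1} = (\Delta_a)^{q_\infty^r - 1}$ for all nonzero $a \in A$. -/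
private lemma st16_gcd_one {ι : Type*} [Nonempty ι] (d : ι → ℕ) (hd : ∀ i, 0 < d i)
    (hgcd : ∀ n : ℕ, (∀ i, n ∣ d i) → n = 1) :
    ∃ s : Finset ι, s.gcd d = 1 := by
  classical
  obtain ⟨i0⟩ := ‹Nonempty ι›
  have hex : ∃ n, 0 < n ∧ ∃ s : Finset ι, s.gcd d = n :=
    ⟨d i0, hd i0, {i0}, by simp [Finset.gcd_singleton]⟩
  obtain ⟨hm0, s, hs⟩ := Nat.find_spec hex
  set m := Nat.find hex with hmdef
  have hdvd : ∀ i, m ∣ d i := by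
    intro i
    have h1 : (insert i s).gcd d ∣ m := by
      rw [Finset.gcd_insert, hs]; exact gcd_dvd_right _ _
    have h2 : (insert i s).gcd d ∣ d i := Finset.gcd_dvd (Finset.mem_insert_self i s)
    have hpos : 0 < (insert i s).gcd d := by
      rcases Nat.eq_zero_or_pos ((insert i s).gcd d) with h | h
      · rw [h] at h2; exact absurd (Nat.eq_zero_of_zero_dvd h2) (hd i).ne'
      · exact h
    have hle : m ≤ (insert i s).gcd d := Nat.find_min' hex ⟨hpos, _, rfl⟩
    have heq : (insert i s).gcd d = m := Nat.le_antisymm (Nat.le_of_dvd hm0 h1) hle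
    exact heq ▸ h2
  exact ⟨s, (hgcd m hdvd) ▸ hs⟩

private lemma st16_bezout {ι : Type*} (s : Finset ι) (f : ι → ℕ) :
    ∃ c : ι → ℤ, ∑ i ∈ s, c i * (f i : ℤ) = ((s.gcd f : ℕ) : ℤ) := by
  classical
  induction s using Finset.induction_on with
  | empty => exact ⟨0, by simp⟩
  | @insert a s ha ih =>
    obtain ⟨c, hc⟩ := ih
    refine ⟨fun j => if j = a then Nat.gcdA (f a) (s.gcd f)
      else Nat.gcdB (f a) (s.gcd f) * c j, ?_⟩
    rw [Finset.sum_insert ha, Finset.gcd_insert]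
    have : ∑ i ∈ s, (if i = a then Nat.gcdA (f a) (s.gcd f)
        else Nat.gcdB (f a) (s.gcd f) * c i) * (f i : ℤ)
        = Nat.gcdB (f a) (s.gcd f) * ∑ i ∈ s, c i * (f i : ℤ) := by
      rw [Finset.mul_sum]
      refine Finset.sum_congr rfl fun i hi => ?_
      have : i ≠ a := fun h => ha (h ▸ hi)
      rw [if_neg this]; ring
    have h1 : (fun j => if j = a then Nat.gcdA (f a) (s.gcd f)
        else Nat.gcdB (f a) (s.gcd f) * c j) a = Nat.gcdA (f a) (s.gcd f) := by simp
    rw [this, hc, h1]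
    have hg : gcd (f a) (s.gcd f) = Nat.gcd (f a) (s.gcd f) := rfl
    rw [hg, Nat.gcd_eq_gcd_ab]
    ring

private lemma st16_zpow_sum {G : Type*} [CommGroup G] {ι : Type*} (a : G) (s : Finset ι)
    (t : ι → ℤ) : a ^ (∑ i ∈ s, t i) = ∏ i ∈ s, a ^ t i := by
  classical
  induction s using Finset.induction_on with
  | empty => simp
  | @insert b s ha ih => rw [Finset.sum_insert ha, Finset.prod_insert ha, zpow_add, ih]

/-- Existence and uniqueness (up to a `(qinf^r − 1)`-th root of unity) of
the Drinfeld discriminant: given invertible elements `Δa i` (indexed by the nonconstant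
elements of `A`, with `|a_i|_∞ = qinf^(d i)` and `gcd of the degrees d i = 1`) satisfying
`(Δa j)^(|a_i|^r − 1) = (Δa i)^(|a_j|^r − 1)`, there is a unit `Δ`, unique up to
`μ_{qinf^r − 1}`, with `Δ^(|a_i|^r − 1) = (Δa i)^(qinf^r − 1)` for all `i`. -/
theorem statement16 {R : Type*} [CommRing R] [IsDomain R]
    {ι : Type*} [Nonempty ι]
    (qinf r : ℕ) (hq : 1 < qinf) (hr : 0 < r)
    (d : ι → ℕ) (hd : ∀ i, 0 < d i)
    (hgcd : ∀ n : ℕ, (∀ i, n ∣ d i) → n = 1)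
    (Δa : ι → Rˣ)
    (compat : ∀ i j, (Δa j) ^ (qinf ^ (r * d i) - 1) = (Δa i) ^ (qinf ^ (r * d j) - 1)) :
    (∃ Δ : Rˣ, ∀ i, Δ ^ (qinf ^ (r * d i) - 1) = (Δa i) ^ (qinf ^ r - 1)) ∧
    (∀ Δ Δ' : Rˣ,
      (∀ i, Δ ^ (qinf ^ (r * d i) - 1) = (Δa i) ^ (qinf ^ r - 1)) →
      (∀ i, Δ' ^ (qinf ^ (r * d i) - 1) = (Δa i) ^ (qinf ^ r - 1)) →
      ∃ ζ : Rˣ, ζ ^ (qinf ^ r - 1) = 1 ∧ Δ' = ζ * Δ) := by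
  classical
  set Q : ℕ := qinf ^ r with hQdef
  have hQ1 : 1 < Q := Nat.one_lt_pow hr.ne' hq
  -- natural exponents
  set g : ι → ℕ := fun i => Q ^ d i - 1 with hgdef
  have hQpow1 : ∀ i, 1 ≤ Q ^ d i := fun i => Nat.one_le_pow _ _ (by omega)
  have hexp : ∀ i, qinf ^ (r * d i) - 1 = g i := fun i => by rw [pow_mul]
  -- integer exponents
  set n : ι → ℤ := fun i => (Q : ℤ) ^ d i - 1 with hndef
  have hcast : ∀ i, ((g i : ℕ) : ℤ) = n i := fun i => by
    simp only [hgdef, hndef]; push_cast [Nat.cast_sub (hQpow1 i)]; ring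
  -- compat in zpow form
  have compat' : ∀ i j, (Δa j) ^ (n i) = (Δa i) ^ (n j) := by
    intro i j
    rw [← hcast, ← hcast, zpow_natCast, zpow_natCast, ← hexp, ← hexp]
    exact compat i j
  -- finset with gcd of degrees 1
  obtain ⟨s, hs⟩ := st16_gcd_one d hd hgcd
  have hsne : s.Nonempty := by
    rcases Finset.eq_empty_or_nonempty s with h | h
    · rw [h] at hs; simp at hs
    · exact h
  obtain ⟨i0, hi0⟩ := hsne
  -- m := gcd of the g i, divides Q - 1
  set m : ℕ := s.gcd g with hmdef
  have hmne : m ≠ 0 := by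
    intro h
    have hdl : s.gcd g ∣ g i0 := Finset.gcd_dvd hi0
    rw [← hmdef, h] at hdl
    have h0 : Q ^ d i0 - 1 = 0 := Nat.eq_zero_of_zero_dvd hdl
    have h1 : 1 < Q ^ d i0 := Nat.one_lt_pow (hd i0).ne' hQ1
    omega
  haveI : NeZero m := ⟨hmne⟩
  have hmdvd : m ∣ Q - 1 := by
    have hQm : ∀ i ∈ s, (Q : ZMod m) ^ d i = 1 := by
      intro i hi
      have h1 : m ∣ g i := Finset.gcd_dvd hi
      have h2 : ((g i : ℕ) : ZMod m) = 0 := (ZMod.natCast_eq_zero_iff _ _).2 h1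
      have h3 : (Q : ℕ) ^ d i = g i + 1 := by
        have := hQpow1 i; simp only [hgdef]; omega
      calc (Q : ZMod m) ^ d i = ((Q ^ d i : ℕ) : ZMod m) := by push_cast; ring
        _ = ((g i + 1 : ℕ) : ZMod m) := by rw [h3]
        _ = 1 := by push_cast [h2]; ring
    have hu : IsUnit (Q : ZMod m) :=
      IsUnit.of_pow_eq_one (hQm i0 hi0) (hd i0).ne'
    have hupow : ∀ i ∈ s, hu.unit ^ d i = 1 := by
      intro i hi
      ext
      push_cast [hu.unit_spec]
      exact hQm i hi
    have hord : orderOf hu.unit ∣ s.gcd d :=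
      Finset.dvd_gcd fun i hi => orderOf_dvd_of_pow_eq_one (hupow i hi)
    rw [hs, Nat.dvd_one] at hord
    have h1 : hu.unit = 1 := orderOf_eq_one_iff.1 hord
    have hQ1m : (Q : ZMod m) = 1 := by rw [← hu.unit_spec, h1]; rfl
    have : ((Q - 1 : ℕ) : ZMod m) = 0 := by
      rw [Nat.cast_sub hQ1.le, hQ1m]; push_cast; ring
    exact (ZMod.natCast_eq_zero_iff _ _).1 this
  obtain ⟨k, hk⟩ := hmdvd
  -- Bezout coefficients scaled by k
  obtain ⟨c, hc⟩ := st16_bezout s g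
  set c' : ι → ℤ := fun i => c i * k with hc'def
  have hsum : ∑ i ∈ s, c' i * n i = (Q : ℤ) - 1 := by
    have : ∑ i ∈ s, c' i * n i = (∑ i ∈ s, c i * (g i : ℤ)) * k := by
      rw [Finset.sum_mul]
      exact Finset.sum_congr rfl fun i _ => by rw [hcast]; ring
    rw [this, hc, ← hmdef]
    have : ((Q - 1 : ℕ) : ℤ) = (Q : ℤ) - 1 := by push_cast [Nat.cast_sub hQ1.le]; ring
    rw [← this, hk]; push_cast; ring
  have hQsub : ((Q - 1 : ℕ) : ℤ) = (Q : ℤ) - 1 := by push_cast [Nat.cast_sub hQ1.le]; ring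
  constructor
  · -- existence
    refine ⟨∏ i ∈ s, Δa i ^ c' i, fun j => ?_⟩
    rw [hexp j, ← zpow_natCast _ (g j), ← zpow_natCast _ (Q - 1), hcast j, hQsub]
    calc (∏ i ∈ s, Δa i ^ c' i) ^ n j
        = ∏ i ∈ s, (Δa i ^ c' i) ^ n j := by rw [Finset.prod_zpow]
      _ = ∏ i ∈ s, (Δa j) ^ (n i * c' i) := by
          refine Finset.prod_congr rfl fun i _ => ?_
          rw [← zpow_mul, mul_comm (c' i) (n j), zpow_mul, compat' j i, ← zpow_mul]
      _ = (Δa j) ^ (∑ i ∈ s, n i * c' i) := (st16_zpow_sum _ _ _).symm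
      _ = (Δa j) ^ ((Q : ℤ) - 1) := by
          rw [show ∑ i ∈ s, n i * c' i = ∑ i ∈ s, c' i * n i from
            Finset.sum_congr rfl fun i _ => mul_comm _ _, hsum]
  · -- uniqueness
    intro Δ Δ' h h'
    refine ⟨Δ' * Δ⁻¹, ?_, by rw [inv_mul_cancel_right]⟩
    have hz : ∀ i, (Δ' * Δ⁻¹) ^ n i = 1 := by
      intro i
      have h1 : Δ ^ n i = Δ' ^ n i := by
        rw [← hcast, zpow_natCast, zpow_natCast, ← hexp, h i, h' i]
      rw [mul_zpow, inv_zpow, h1, mul_inv_cancel]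
    rw [← zpow_natCast _ (Q - 1), hQsub, ← hsum, st16_zpow_sum]
    refine Finset.prod_eq_one fun i _ => ?_
    rw [mul_comm (c' i) (n i), zpow_mul, hz i, one_zpow]
end
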